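/- arXiv:1510.01149 — 11 statements merged into one kernel-verified Lean document; each statement's English description precedes it below -/
import Mathlib

section
/- Let D ⊆ ℝⁿ be open and p-convex with respect to the componentwise order (i.e., for all x, y ∈ D with x ≤ y componentwise and all μ ∈ (0,1), μx + (1−μ)y ∈ D), let f : D → ℝⁿ be continuously differentiable, and let φ be a flow of ẋ = f(x) with φ(t,x) ∈ D for all t ≥ 0 and x ∈ D. Then ∂fᵢ/∂xⱼ(x) ≥ 0 for all i ≠ j and all x ∈ D if and only if the system is monotone with respect to the nonnegative orthant, i.e., for all x, y ∈ D with x ≤ y componentwise and all t ≥ 0, φ(t,x) ≤ φ(t,y) componentwise. -/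
open Set Filter Metric
open scoped Topology

theorem quasi_aux {n : ℕ} (D : Set (Fin n → ℝ)) (hD : IsOpen D)
    (hpconv : ∀ x ∈ D, ∀ y ∈ D, x ≤ y → ∀ μ : ℝ, μ ∈ Set.Ioo (0 : ℝ) 1 →
      μ • x + (1 - μ) • y ∈ D)
    (f : (Fin n → ℝ) → (Fin n → ℝ)) (hf : ContDiffOn ℝ 1 f D)
    (hJac : ∀ x ∈ D, ∀ i j : Fin n, i ≠ j → 0 ≤ fderiv ℝ f x (Pi.single j 1) i)
    (a : Fin n → ℝ) (ha : a ∈ D) (b : Fin n → ℝ) (hb : b ∈ D) (hab : a ≤ b)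
    (i : Fin n) (hi : a i = b i) : f a i ≤ f b i := by
  have hdiff : ∀ z ∈ D, HasFDerivAt f (fderiv ℝ f z) z :=
    fun z hz => ((hf.differentiableOn one_ne_zero).differentiableAt (hD.mem_nhds hz)).hasFDerivAt
  set w := b - a with hw
  have hseg : ∀ s ∈ Icc (0:ℝ) 1, a + s • w ∈ D := by
    intro s hs
    rcases eq_or_lt_of_le hs.1 with h0 | h0
    · simpa [← h0] using ha
    rcases eq_or_lt_of_le hs.2 with h1 | h1
    · have : a + s • w = b := by rw [h1]; simp [hw]
      rwa [this]
    · have := hpconv a ha b hb hab (1 - s) ⟨by linarith, by linarith⟩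
      have he : (1 - s) • a + (1 - (1 - s)) • b = a + s • w := by
        rw [hw]; module
      rwa [he] at this
  set g : ℝ → ℝ := fun s => f (a + s • w) i with hg
  have hderiv : ∀ s ∈ Icc (0:ℝ) 1, HasDerivAt g (fderiv ℝ f (a + s • w) w i) s := by
    intro s hs
    have h1 : HasDerivAt (fun s : ℝ => a + s • w) w s := by
      simpa using ((hasDerivAt_id s).smul_const w).const_add a
    have h2 := (hdiff _ (hseg s hs)).comp_hasDerivAt s h1
    exact (ContinuousLinearMap.proj i (R := ℝ) (φ := fun _ : Fin n => ℝ)).hasFDerivAt.comp_hasDerivAt s h2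
  have hnn : ∀ s ∈ Icc (0:ℝ) 1, 0 ≤ fderiv ℝ f (a + s • w) w i := by
    intro s hs
    have hp : a + s • w ∈ D := hseg s hs
    have hrep : w = ∑ j : Fin n, w j • (Pi.single j 1 : Fin n → ℝ) := by
      ext k
      rw [Finset.sum_apply]
      rw [Finset.sum_eq_single k]
      · simp
      · intro j _ hj; simp [Pi.single_eq_of_ne (Ne.symm hj)]
      · simp
    calc (0:ℝ) ≤ ∑ j : Fin n, w j * fderiv ℝ f (a + s • w) (Pi.single j 1) i := by
          apply Finset.sum_nonneg
          intro j _
          rcases eq_or_ne j i with rfl | hji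
          · have : w j = 0 := by simp [hw, hi]
            simp [this]
          · exact mul_nonneg (by simpa [hw] using sub_nonneg.2 (hab j))
              (hJac _ hp i j (Ne.symm hji))
      _ = fderiv ℝ f (a + s • w) w i := by
          set A := fderiv ℝ f (a + s • w) with hA
          conv_rhs => rw [hrep, map_sum, Finset.sum_apply]
          refine Finset.sum_congr rfl fun j _ => ?_
          rw [map_smul]
          simp [mul_comm]
  have hmono : g 0 ≤ g 1 := by
    have hc : ContinuousOn g (Icc 0 1) := fun s hs => ((hderiv s hs).continuousAt).continuousWithinAt
    have := monotoneOn_of_deriv_nonneg (convex_Icc (0:ℝ) 1) hc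
      (fun s hs => ((hderiv s (interior_subset hs)).differentiableAt).differentiableWithinAt)
      (fun s hs => by
        rw [(hderiv s (interior_subset hs)).deriv]
        exact hnn s (interior_subset hs))
    exact this (by norm_num) (by norm_num) (by norm_num)
  have e0 : g 0 = f a i := by simp [hg]
  have e1 : g 1 = f b i := by simp [hg, hw]
  rw [← e0, ← e1]; exact hmono

theorem comp_aux {n : ℕ} [Nonempty (Fin n)] (D : Set (Fin n → ℝ)) (hD : IsOpen D)
    (f : (Fin n → ℝ) → (Fin n → ℝ)) (hf : ContDiffOn ℝ 1 f D)
    (quasi : ∀ a ∈ D, ∀ b ∈ D, a ≤ b → ∀ i : Fin n, a i = b i → f a i ≤ f b i)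
    (T : ℝ) (hT : 0 ≤ T) (u v : ℝ → Fin n → ℝ)
    (huD : ∀ t ∈ Icc (0:ℝ) T, u t ∈ D) (hvD : ∀ t ∈ Icc (0:ℝ) T, v t ∈ D)
    (hu' : ∀ t ∈ Icc (0:ℝ) T, HasDerivAt u (f (u t)) t)
    (hv' : ∀ t ∈ Icc (0:ℝ) T, HasDerivAt v (f (v t)) t)
    (h0 : u 0 ≤ v 0) : u T ≤ v T := by
  have hdiff : ∀ z ∈ D, HasFDerivAt f (fderiv ℝ f z) z :=
    fun z hz => ((hf.differentiableOn one_ne_zero).differentiableAt (hD.mem_nhds hz)).hasFDerivAt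
  -- continuity of trajectories
  have hucont : ContinuousOn u (Icc 0 T) := fun t ht => (hu' t ht).continuousAt.continuousWithinAt
  have hvcont : ContinuousOn v (Icc 0 T) := fun t ht => (hv' t ht).continuousAt.continuousWithinAt
  -- compact neighborhood of the v-trajectory
  have hK : IsCompact (v '' Icc 0 T) := (isCompact_Icc).image_of_continuousOn hvcont
  have hKD : v '' Icc 0 T ⊆ D := by rintro _ ⟨t, ht, rfl⟩; exact hvD t ht
  obtain ⟨r, hr, hrD⟩ := hK.exists_cthickening_subset_open hD hKD
  set N := Metric.cthickening r (v '' Icc 0 T) with hN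
  have hNc : IsCompact N := hK.cthickening
  have hND : N ⊆ D := hrD
  -- bound on the derivative on N
  obtain ⟨C, hC⟩ := hNc.exists_bound_of_continuousOn
    ((hf.continuousOn_fderiv_of_isOpen hD le_rfl).mono hND)
  set L := max C 1 with hLdef
  have hL : (0:ℝ) < L := lt_of_lt_of_le one_pos (le_max_right C 1)
  -- one vector
  set one : Fin n → ℝ := fun _ => 1 with hone
  have hnorm_one : ‖one‖ = 1 := by simp [hone]
  -- Lipschitz-type bound along vertical segments over the v-trajectory
  have key : ∀ t ∈ Icc (0:ℝ) T, ∀ s : ℝ, 0 ≤ s → s ≤ r → v t + s • one ∈ D ∧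
      ∀ j : Fin n, f (v t + s • one) j - f (v t) j ≤ L * s := by
    intro t ht s hs hsr
    have hvtK : v t ∈ v '' Icc 0 T := mem_image_of_mem v ht
    have hsegN : segment ℝ (v t) (v t + s • one) ⊆ N := by
      intro z hz
      rw [segment_eq_image'] at hz
      obtain ⟨θ, hθ, rfl⟩ := hz
      have : (v t + θ • (v t + s • one - v t)) = v t + (θ * s) • one := by
        rw [add_sub_cancel_left, smul_smul]
      beta_reduce
      rw [this]
      apply Metric.mem_cthickening_of_dist_le _ (v t) r _ hvtK
      rw [dist_eq_norm, add_sub_cancel_left, norm_smul, hnorm_one]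
      simp only [mul_one, Real.norm_eq_abs, abs_of_nonneg (mul_nonneg hθ.1 hs)]
      calc θ * s ≤ 1 * s := by nlinarith [hθ.2]
        _ ≤ r := by linarith
    have hmem : v t + s • one ∈ N := by
      have := hsegN (right_mem_segment ℝ _ _); exact this
    refine ⟨hND hmem, fun j => ?_⟩
    have hbd := Convex.norm_image_sub_le_of_norm_hasFDerivWithin_le
      (fun z hz => (hdiff z (hND (hsegN hz))).hasFDerivWithinAt)
      (fun z hz => (hC z (hsegN hz)).trans (le_max_left C 1))
      (convex_segment _ _) (left_mem_segment ℝ _ _) (right_mem_segment ℝ _ _)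
    have h1 : f (v t + s • one) j - f (v t) j ≤ ‖f (v t + s • one) - f (v t)‖ := by
      have := norm_le_pi_norm (f (v t + s • one) - f (v t)) j
      rw [Pi.sub_apply, Real.norm_eq_abs] at this
      exact (le_abs_self _).trans this
    refine h1.trans (hbd.trans ?_)
    rw [add_sub_cancel_left, norm_smul, hnorm_one, Real.norm_eq_abs, abs_of_nonneg hs]
    simp [hLdef]
  -- coordinate difference functions and their max
  set c : Fin n → ℝ → ℝ := fun j t => u t j - v t j with hcdef
  set d : Fin n → ℝ → ℝ := fun j t => f (u t) j - f (v t) j with hddef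
  have hc' : ∀ (j : Fin n), ∀ t ∈ Icc (0:ℝ) T, HasDerivAt (c j) (d j t) t := by
    intro j t ht
    have h1 := (ContinuousLinearMap.proj j (R := ℝ)
      (φ := fun _ : Fin n => ℝ)).hasFDerivAt.comp_hasDerivAt t (hu' t ht)
    have h2 := (ContinuousLinearMap.proj j (R := ℝ)
      (φ := fun _ : Fin n => ℝ)).hasFDerivAt.comp_hasDerivAt t (hv' t ht)
    exact h1.sub h2
  set ρ : ℝ → ℝ := fun t => Finset.univ.sup' Finset.univ_nonempty (fun j => c j t) with hρdef
  have hρcont : ContinuousOn ρ (Icc 0 T) :=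
    ContinuousOn.finset_sup'_apply Finset.univ_nonempty
      (fun j _ => fun t ht => (hc' j t ht).continuousAt.continuousWithinAt)
  have hcleρ : ∀ (j : Fin n) (t : ℝ), c j t ≤ ρ t := by
    intro j t
    rw [hρdef]
    exact Finset.le_sup' (fun j => c j t) (Finset.mem_univ j)
  have hρmem : ∀ t : ℝ, ∃ j : Fin n, c j t = ρ t := by
    intro t
    obtain ⟨j, _, hj⟩ := Finset.exists_mem_eq_sup' Finset.univ_nonempty (fun j => c j t)
    exact ⟨j, hj.symm⟩
  -- the ε-perturbed bound
  have main : ∀ ε : ℝ, 0 < ε → ε * Real.exp (2 * L * T) ≤ r →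
      ∀ t ∈ Icc (0:ℝ) T, ρ t ≤ ε * Real.exp (2 * L * t) := by
    intro ε hε hεr
    set B : ℝ → ℝ := fun t => ε * Real.exp (2 * L * t) with hBdef
    set B' : ℝ → ℝ := fun t => ε * (Real.exp (2 * L * t) * (2 * L)) with hB'def
    have hBpos : ∀ t, 0 < B t := fun t => mul_pos hε (Real.exp_pos _)
    have hBder : ∀ t : ℝ, HasDerivAt B (B' t) t := by
      intro t
      have h1 : HasDerivAt (fun t : ℝ => 2 * L * t) (2 * L) t := by
        simpa using (hasDerivAt_id t).const_mul (2 * L)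
      exact (h1.exp).const_mul ε
    have hBler : ∀ t ∈ Icc (0:ℝ) T, B t ≤ r := by
      intro t ht
      refine le_trans ?_ hεr
      have := Real.exp_le_exp.2 (mul_le_mul_of_nonneg_left ht.2 (by positivity : (0:ℝ) ≤ 2 * L))
      exact mul_le_mul_of_nonneg_left this hε.le
    -- the Dini-type upper bound function
    set F : ℝ → ℝ := fun t =>
      (Finset.univ.filter (fun j => c j t = ρ t)).sup'
        (by
          obtain ⟨j, hj⟩ := hρmem t
          exact ⟨j, Finset.mem_filter.2 ⟨Finset.mem_univ j, hj⟩⟩)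
        (fun j => d j t) with hFdef
    have hFle : ∀ t : ℝ, ∀ j : Fin n, c j t = ρ t → d j t ≤ F t := by
      intro t j hj
      rw [hFdef]
      exact Finset.le_sup' (fun j => d j t) (Finset.mem_filter.2 ⟨Finset.mem_univ j, hj⟩)
    -- slope estimate
    have hslope : ∀ x ∈ Ico (0:ℝ) T, ∀ r', F x < r' → ∃ᶠ z in 𝓝[>] x, slope ρ x z < r' := by
      intro x hx r' hr'
      have hxIcc : x ∈ Icc (0:ℝ) T := ⟨hx.1, hx.2.le⟩
      -- pigeonhole: some coordinate attains the max frequently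
      have hfreq : ∃ j : Fin n, ∃ᶠ z in 𝓝[>] x, ρ z = c j z := by
        by_contra hcon
        push_neg at hcon
        have hev : ∀ᶠ z in 𝓝[>] x, ∀ j : Fin n, ρ z ≠ c j z :=
          eventually_all.2 fun j => (hcon j)
        obtain ⟨z, hz⟩ := hev.exists
        obtain ⟨j, hj⟩ := hρmem z
        exact hz j hj.symm
      obtain ⟨j, hfreq⟩ := hfreq
      rcases eq_or_lt_of_le (hcleρ j x) with heq | hlt
      · -- j attains the max at x
        have hd : d j x ≤ F x := hFle x j heq
        have htends := hasDerivAt_iff_tendsto_slope.1 (hc' j x hxIcc)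
        have hev : ∀ᶠ z in 𝓝[≠] x, slope (c j) x z < r' :=
          htends (Iio_mem_nhds (lt_of_le_of_lt hd hr'))
        have hmono : 𝓝[>] x ≤ 𝓝[≠] x :=
          nhdsWithin_mono x (fun z hz => ne_of_gt hz)
        have hev' : ∀ᶠ z in 𝓝[>] x, slope (c j) x z < r' := hev.filter_mono hmono
        refine (hfreq.and_eventually hev').mono ?_
        rintro z ⟨hz1, hz2⟩
        have : slope ρ x z = slope (c j) x z := by
          rw [slope_def_field, slope_def_field, hz1, heq]
        rwa [this]
      · -- j doesn't attain the max at x: slope tends to -∞ on the attaining set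
        have t1 : Tendsto (fun z : ℝ => (z - x)⁻¹) (𝓝[>] x) atTop := by
          have hsub : Tendsto (fun z : ℝ => z - x) (𝓝[>] x) (𝓝[>] 0) := by
            apply tendsto_nhdsWithin_of_tendsto_nhds_of_eventually_within
            · have h : Tendsto (fun z : ℝ => z - x) (𝓝 x) (𝓝 (x - x)) :=
                (continuous_id.sub (continuous_const (y := x))).tendsto x
              rw [sub_self] at h
              exact h.mono_left nhdsWithin_le_nhds
            · exact eventually_nhdsWithin_of_forall fun z hz => mem_Ioi.2 (sub_pos.2 hz)
          exact tendsto_inv_nhdsGT_zero.comp hsub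
        have t2 : Tendsto (fun z : ℝ => c j z - ρ x) (𝓝[>] x) (𝓝 (c j x - ρ x)) :=
          (((hc' j x hxIcc).continuousAt.tendsto).mono_left nhdsWithin_le_nhds).sub
            tendsto_const_nhds
        have t3 : Tendsto (fun z : ℝ => (z - x)⁻¹ * (c j z - ρ x)) (𝓝[>] x) atBot :=
          t1.atTop_mul_neg (sub_neg.2 hlt) t2
        have hev : ∀ᶠ z in 𝓝[>] x, (z - x)⁻¹ * (c j z - ρ x) < r' :=
          t3.eventually_lt_atBot r'
        refine (hfreq.and_eventually hev).mono ?_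
        rintro z ⟨hz1, hz2⟩
        have : slope ρ x z = (z - x)⁻¹ * (c j z - ρ x) := by
          rw [slope_def_field, hz1, div_eq_inv_mul]
        rwa [this]
    -- apply the fencing theorem
    have happ := image_le_of_liminf_slope_right_lt_deriv_boundary' (f := ρ) (f' := F)
      (a := 0) (b := T) hρcont hslope
      (by
        have hρ0 : ρ 0 ≤ 0 := by
          rw [hρdef]
          refine Finset.sup'_le _ _ fun j _ => ?_
          simpa [hcdef] using sub_nonpos.2 (h0 j)
        calc ρ 0 ≤ 0 := hρ0
          _ ≤ B 0 := (hBpos 0).le)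
      (fun t _ => (hBder t).continuousAt.continuousWithinAt)
      (fun t _ => (hBder t).hasDerivWithinAt)
      (by
        -- at contact points, F < B'
        intro x hx hcontact
        have hxIcc : x ∈ Icc (0:ℝ) T := ⟨hx.1, hx.2.le⟩
        rw [hFdef]
        refine (Finset.sup'_lt_iff _).2 fun j hj => ?_
        rw [Finset.mem_filter] at hj
        have hjmax : c j x = ρ x := hj.2
        -- quasimonotonicity plus Lipschitz bound
        have hBx : B x = ρ x := hcontact.symm
        have hBxr : B x ≤ r := hBler x hxIcc
        obtain ⟨hmemD, hlip⟩ := key x hxIcc (B x) (hBpos x).le hBxr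
        have hle1 : f (u x) j ≤ f (v x + B x • one) j := by
          apply quasi (u x) (huD x hxIcc) _ hmemD
          · intro k
            have := hcleρ k x
            simp only [hcdef] at this
            simp only [hone, Pi.add_apply, Pi.smul_apply, smul_eq_mul, mul_one]
            linarith [hBx ▸ this]
          · have := hjmax
            simp only [hcdef] at this
            simp only [hone, Pi.add_apply, Pi.smul_apply, smul_eq_mul, mul_one]
            linarith [hBx ▸ this]
        have hle2 : f (v x + B x • one) j - f (v x) j ≤ L * B x := hlip j
        have : d j x ≤ L * B x := by
          simp only [hddef]
          linarith
        refine lt_of_le_of_lt this ?_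
        have : B' x = 2 * L * B x := by rw [hB'def, hBdef]; ring
        rw [this]
        have hBp := hBpos x
        nlinarith
      )
    exact fun t ht => happ ht
  -- let ε → 0
  intro j
  have hcj : c j T ≤ 0 := by
    by_contra hpos
    push_neg at hpos
    set ε₀ : ℝ := min (r / Real.exp (2 * L * T)) (c j T / (2 * Real.exp (2 * L * T))) with hε₀
    have hexp : (0:ℝ) < Real.exp (2 * L * T) := Real.exp_pos _
    have hε₀pos : 0 < ε₀ := lt_min (div_pos hr hexp) (div_pos hpos (by positivity))
    have h1 : ε₀ * Real.exp (2 * L * T) ≤ r := by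
      have : ε₀ ≤ r / Real.exp (2 * L * T) := min_le_left _ _
      calc ε₀ * Real.exp (2 * L * T) ≤ r / Real.exp (2 * L * T) * Real.exp (2 * L * T) := by
            exact mul_le_mul_of_nonneg_right this hexp.le
        _ = r := by field_simp
    have h2 := (hcleρ j T).trans (main ε₀ hε₀pos h1 T ⟨hT, le_rfl⟩)
    have h3 : ε₀ * Real.exp (2 * L * T) ≤ c j T / 2 := by
      have : ε₀ ≤ c j T / (2 * Real.exp (2 * L * T)) := min_le_right _ _
      calc ε₀ * Real.exp (2 * L * T) ≤ c j T / (2 * Real.exp (2 * L * T)) * Real.exp (2 * L * T) :=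
            mul_le_mul_of_nonneg_right this hexp.le
        _ = c j T / 2 := by field_simp
    have h4 := h2.trans h3
    linarith
  simpa [hcdef] using sub_nonpos.1 hcj


/-- **Kamke–Müller conditions.** For a continuously differentiable vector field `f` on an
open, p-convex set `D`, nonnegativity of the off-diagonal entries of the Jacobian on `D` is
equivalent to monotonicity of the flow with respect to the componentwise (nonnegative orthant)
order. -/
theorem stmt_0 {n : ℕ} (D : Set (Fin n → ℝ)) (hD : IsOpen D)
    (hpconv : ∀ x ∈ D, ∀ y ∈ D, x ≤ y → ∀ μ : ℝ, μ ∈ Set.Ioo (0 : ℝ) 1 →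
      μ • x + (1 - μ) • y ∈ D)
    (f : (Fin n → ℝ) → (Fin n → ℝ)) (hf : ContDiffOn ℝ 1 f D)
    (φ : ℝ → (Fin n → ℝ) → (Fin n → ℝ))
    (hφ0 : ∀ x ∈ D, φ 0 x = x)
    (hφD : ∀ t : ℝ, 0 ≤ t → ∀ x ∈ D, φ t x ∈ D)
    (hφ' : ∀ x ∈ D, ∀ t : ℝ, 0 ≤ t → HasDerivAt (fun τ => φ τ x) (f (φ t x)) t) :
    (∀ x ∈ D, ∀ i j : Fin n, i ≠ j → 0 ≤ fderiv ℝ f x (Pi.single j 1) i) ↔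
      (∀ x ∈ D, ∀ y ∈ D, x ≤ y → ∀ t : ℝ, 0 ≤ t → φ t x ≤ φ t y) := by
  constructor
  · intro hJac x hx y hy hxy t ht
    intro i
    haveI : Nonempty (Fin n) := ⟨i⟩
    have quasi : ∀ a ∈ D, ∀ b ∈ D, a ≤ b → ∀ k : Fin n, a k = b k → f a k ≤ f b k :=
      fun a ha b hb hab k hk => quasi_aux D hD hpconv f hf hJac a ha b hb hab k hk
    have h0 : φ 0 x ≤ φ 0 y := by rw [hφ0 x hx, hφ0 y hy]; exact hxy
    exact comp_aux D hD f hf quasi t ht (fun τ => φ τ x) (fun τ => φ τ y)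
      (fun s hs => hφD s hs.1 x hx) (fun s hs => hφD s hs.1 y hy)
      (fun s hs => hφ' x hx s hs.1) (fun s hs => hφ' y hy s hs.1) h0 i
  · intro hmono x hx i j hij
    obtain ⟨δ, hδ, hball⟩ := Metric.isOpen_iff.1 hD x hx
    set w : Fin n → ℝ := Pi.single j 1 with hwdef
    have hwnorm : ‖w‖ ≤ 1 := by
      apply pi_norm_le_iff_of_nonneg zero_le_one |>.2
      intro k
      rcases eq_or_ne k j with rfl | hk
      · simp [hwdef]
      · simp [hwdef, Pi.single_eq_of_ne hk]
    have hwnonneg : ∀ k, 0 ≤ w k := by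
      intro k
      rcases eq_or_ne k j with rfl | hk
      · simp [hwdef]
      · simp [hwdef, Pi.single_eq_of_ne hk]
    have hwi : w i = 0 := Pi.single_eq_of_ne hij 1
    -- membership of perturbed points
    have hmem : ∀ ε : ℝ, 0 < ε → ε < δ → x + ε • w ∈ D := by
      intro ε hε hεδ
      apply hball
      rw [Metric.mem_ball, dist_eq_norm, add_sub_cancel_left, norm_smul, Real.norm_eq_abs,
        abs_of_nonneg hε.le]
      calc ε * ‖w‖ ≤ ε * 1 := by nlinarith
        _ < δ := by linarith
    -- monotonicity of f in the j-th direction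
    have hstep : ∀ ε : ℝ, 0 < ε → ε < δ → f x i ≤ f (x + ε • w) i := by
      intro ε hε hεδ
      set y := x + ε • w with hydef
      have hyD : y ∈ D := hmem ε hε hεδ
      have hxley : x ≤ y := by
        intro k
        have := hwnonneg k
        simp only [hydef, Pi.add_apply, Pi.smul_apply, smul_eq_mul]
        nlinarith
      have hφle := hmono x hx y hyD hxley
      have hder : HasDerivAt (fun t => φ t y i - φ t x i) (f y i - f x i) 0 := by
        have h1 := (ContinuousLinearMap.proj i (R := ℝ)
          (φ := fun _ : Fin n => ℝ)).hasFDerivAt.comp_hasDerivAt 0 (hφ' y hyD 0 le_rfl)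
        have h2 := (ContinuousLinearMap.proj i (R := ℝ)
          (φ := fun _ : Fin n => ℝ)).hasFDerivAt.comp_hasDerivAt 0 (hφ' x hx 0 le_rfl)
        have := h1.sub h2
        rw [hφ0 y hyD, hφ0 x hx] at this
        exact this
      set h : ℝ → ℝ := fun t => φ t y i - φ t x i with hhdef
      have hh0 : h 0 = 0 := by
        simp only [hhdef, hφ0 y hyD, hφ0 (x + ε • w) (hmem ε hε hεδ), hφ0 x hx, hydef, Pi.add_apply, Pi.smul_apply,
          smul_eq_mul, hwi]
        ring
      have htend : Tendsto (slope h 0) (𝓝[>] 0) (𝓝 (f y i - f x i)) :=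
        (hasDerivAt_iff_tendsto_slope.1 hder).mono_left
          (nhdsWithin_mono 0 fun z hz => ne_of_gt hz)
      have hnn : ∀ᶠ z in 𝓝[>] (0:ℝ), 0 ≤ slope h 0 z := by
        apply eventually_nhdsWithin_of_forall
        intro z hz
        rw [slope_def_field, hh0, sub_zero, sub_zero]
        apply div_nonneg _ (le_of_lt hz)
        have := hφle z (le_of_lt hz) i
        simp only [hhdef]
        linarith
      exact sub_nonneg.1 (ge_of_tendsto htend hnn)
    -- pass to the limit in the difference quotient
    have hgder : HasDerivAt (fun ε : ℝ => f (x + ε • w) i) (fderiv ℝ f x w i) 0 := by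
      have hfd : HasFDerivAt f (fderiv ℝ f x) x :=
        ((hf.differentiableOn one_ne_zero).differentiableAt (hD.mem_nhds hx)).hasFDerivAt
      have h1 : HasDerivAt (fun ε : ℝ => x + ε • w) w 0 := by
        simpa using ((hasDerivAt_id (0:ℝ)).smul_const w).const_add x
      have hfd' : HasFDerivAt f (fderiv ℝ f x) (x + (0:ℝ) • w) := by simpa using hfd
      have h2 : HasDerivAt (fun ε : ℝ => f (x + ε • w)) (fderiv ℝ f x w) 0 :=
        hfd'.comp_hasDerivAt 0 h1
      exact (ContinuousLinearMap.proj i (R := ℝ)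
        (φ := fun _ : Fin n => ℝ)).hasFDerivAt.comp_hasDerivAt 0 h2
    have htend : Tendsto (slope (fun ε : ℝ => f (x + ε • w) i) 0) (𝓝[>] 0)
        (𝓝 (fderiv ℝ f x w i)) :=
      (hasDerivAt_iff_tendsto_slope.1 hgder).mono_left
        (nhdsWithin_mono 0 fun z hz => ne_of_gt hz)
    have hnn : ∀ᶠ z in 𝓝[>] (0:ℝ), 0 ≤ slope (fun ε : ℝ => f (x + ε • w) i) 0 z := by
      filter_upwards [Ioo_mem_nhdsGT_of_mem (Set.mem_Ico.2 ⟨le_rfl, hδ⟩)] with z hz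
      rw [slope_def_field]
      apply div_nonneg
      · have := hstep z hz.1 hz.2
        have h0 : x + (0:ℝ) • w = x := by simp
        rw [h0]
        linarith
      · simpa using le_of_lt hz.1
    exact ge_of_tendsto htend hnn
end

section
/- Let A ∈ ℝ^{n×n} with n ≥ 2, let λ₁ ∈ ℝ and λ₂, …, λₙ ∈ ℂ satisfy λ₁ < 0 and λ₁ > Re(λᵢ) for all i ≥ 2, let w₁ ∈ ℝⁿ satisfy Aᵀ w₁ = λ₁ w₁, and let w₂, …, wₙ ∈ ℂⁿ satisfy (Aᵀ as a complex matrix) wᵢ = λᵢ wᵢ. For positive scalars α₂, …, αₙ define the set K_α = { y ∈ ℝⁿ : Σ_{i=2}^n αᵢ |wᵢᵀ y|² ≤ (w₁ᵀ y)² and w₁ᵀ y ≥ 0 }. Then the system ẋ = Ax is K_α-positive: for every t ≥ 0 and every y ∈ K_α, e^{At} y ∈ K_α. -/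
open NormedSpace Matrix

lemma exp_mulVec_eig {𝕜 : Type*} [RCLike 𝕜] {n : ℕ} (M : Matrix (Fin n) (Fin n) 𝕜)
    (v : Fin n → 𝕜) (μ : 𝕜) (h : M.mulVec v = μ • v) :
    (exp M).mulVec v = exp μ • v := by
  letI : NormedRing (Matrix (Fin n) (Fin n) 𝕜) := Matrix.linftyOpNormedRing
  letI : NormedAlgebra 𝕜 (Matrix (Fin n) (Fin n) 𝕜) := Matrix.linftyOpNormedAlgebra
  have hpow : ∀ k : ℕ, (M ^ k).mulVec v = μ ^ k • v := by
    intro k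
    induction k with
    | zero => simp
    | succ k ih =>
      rw [pow_succ, ← Matrix.mulVec_mulVec, h, Matrix.mulVec_smul, ih, smul_smul, pow_succ,
        mul_comm]
  have hsum : Summable fun k : ℕ => ((Nat.factorial k : 𝕜))⁻¹ • M ^ k :=
    @expSeries_summable' 𝕜 _ _ _ _ _ _ (FiniteDimensional.complete 𝕜 _) M
  let f : Matrix (Fin n) (Fin n) 𝕜 →ₗ[𝕜] (Fin n → 𝕜) :=
    { toFun := fun N => N.mulVec v
      map_add' := fun N₁ N₂ => Matrix.add_mulVec N₁ N₂ v
      map_smul' := fun c N => Matrix.smul_mulVec c N v }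
  have hf : Continuous f := f.continuous_of_finiteDimensional
  have := (⟨f, hf⟩ : Matrix (Fin n) (Fin n) 𝕜 →L[𝕜] (Fin n → 𝕜)).map_tsum hsum
  rw [exp_eq_tsum 𝕜]
  simp only [ContinuousLinearMap.coe_mk'] at this
  change f _ = _
  rw [this]
  have : ∀ k : ℕ, f (((Nat.factorial k : 𝕜))⁻¹ • M ^ k) = (((Nat.factorial k : 𝕜))⁻¹ * μ ^ k) • v := by
    intro k
    show (((Nat.factorial k : 𝕜))⁻¹ • M ^ k).mulVec v = _
    rw [Matrix.smul_mulVec, hpow, smul_smul]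
  simp_rw [this]
  rw [Summable.tsum_smul_const ((expSeries_summable' (𝕂 := 𝕜) μ).congr fun k => by rw [smul_eq_mul]) _,
    exp_eq_tsum 𝕜]
  rfl


/-- The cone `K_α = { y : Σ_{i≥2} αᵢ |wᵢᵀ y|² ≤ (w₁ᵀ y)², w₁ᵀ y ≥ 0 }` built from the left
eigenvectors `w₁ ∈ ℝⁿ` and `w₂, …, wₙ ∈ ℂⁿ`. -/
def Kcone {n : ℕ} [NeZero n] (w1 : Fin n → ℝ) (w : Fin n → Fin n → ℂ)
    (α : Fin n → ℝ) : Set (Fin n → ℝ) :=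
  {y : Fin n → ℝ |
    (∑ i ∈ Finset.univ.erase (0 : Fin n),
        α i * ‖∑ j, w i j * (y j : ℂ)‖ ^ 2) ≤ (∑ j, w1 j * y j) ^ 2 ∧
    0 ≤ ∑ j, w1 j * y j}

/-- If `λ₁ < 0` is a real eigenvalue of `Aᵀ` with left eigenvector `w₁ ∈ ℝⁿ`, dominating the
real parts of the remaining eigenvalues `λ₂, …, λₙ` with left eigenvectors `w₂, …, wₙ ∈ ℂⁿ`,
then the system `ẋ = Ax` is `K_α`-positive for any positive scalars `α₂, …, αₙ`. -/
theorem stmt_3 {n : ℕ} [NeZero n] (hn : 2 ≤ n) (A : Matrix (Fin n) (Fin n) ℝ)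
    (l₁ : ℝ) (lam : Fin n → ℂ) (hneg : l₁ < 0)
    (hdom : ∀ i : Fin n, i ≠ 0 → (lam i).re < l₁)
    (w1 : Fin n → ℝ) (hw1 : A.transpose.mulVec w1 = l₁ • w1)
    (w : Fin n → Fin n → ℂ)
    (hw : ∀ i : Fin n, i ≠ 0 →
      (A.map Complex.ofReal).transpose.mulVec (w i) = lam i • w i)
    (α : Fin n → ℝ) (hα : ∀ i : Fin n, i ≠ 0 → 0 < α i) :
    ∀ t : ℝ, 0 ≤ t → ∀ y ∈ Kcone w1 w α,
      (NormedSpace.exp (t • A)).mulVec y ∈ Kcone w1 w α := by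
  simp only [Kcone, Set.mem_setOf_eq]
  intro t ht y hy
  obtain ⟨hy1, hy2⟩ := hy
  set E := NormedSpace.exp (t • A) with hE
  -- real left eigenvector of the exponential
  have h1 : Eᵀ.mulVec w1 = Real.exp (t * l₁) • w1 := by
    rw [hE, ← Matrix.exp_transpose, Matrix.transpose_smul,
      exp_mulVec_eig (t • Aᵀ) w1 (t * l₁)
        (by rw [Matrix.smul_mulVec, hw1, smul_smul]), Real.exp_eq_exp_ℝ]
  have hreal : ∑ j, w1 j * (E.mulVec y) j = Real.exp (t * l₁) * ∑ j, w1 j * y j := by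
    calc (∑ j, w1 j * (E.mulVec y) j) = w1 ⬝ᵥ E.mulVec y := rfl
      _ = (Eᵀ.mulVec w1) ⬝ᵥ y := by
          rw [Matrix.dotProduct_mulVec, ← Matrix.mulVec_transpose]
      _ = Real.exp (t * l₁) * ∑ j, w1 j * y j := by
          rw [h1, smul_dotProduct]; rfl
  -- complexification of the exponential
  have hEC : E.map Complex.ofReal = NormedSpace.exp (t • A.map Complex.ofReal) := by
    letI : NormedRing (Matrix (Fin n) (Fin n) ℝ) := Matrix.linftyOpNormedRing
    letI : NormedAlgebra ℝ (Matrix (Fin n) (Fin n) ℝ) := Matrix.linftyOpNormedAlgebra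
    letI : NormedRing (Matrix (Fin n) (Fin n) ℂ) := Matrix.linftyOpNormedRing
    letI : NormedAlgebra ℝ (Matrix (Fin n) (Fin n) ℂ) := Matrix.linftyOpNormedAlgebra
    have hcont : Continuous (Complex.ofRealAm.mapMatrix (m := Fin n)) :=
      Continuous.matrix_map continuous_id Complex.continuous_ofReal
    have hmap := @map_exp _ _ _ (NormedAlgebra.restrictScalars ℚ ℝ _) (FiniteDimensional.complete ℝ _)
      _ _ _ _ _ (Complex.ofRealAm.mapMatrix (m := Fin n)) hcont (t • A)
    simp only [AlgHom.mapMatrix_apply, Complex.ofRealAm_coe] at hmap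
    rw [hE]
    refine hmap.trans ?_
    congr 1
    ext i j
    simp [Complex.real_smul]
  have hcx : ∀ i : Fin n, i ≠ 0 → (∑ j, w i j * ((E.mulVec y) j : ℂ))
      = Complex.exp (t * lam i) * ∑ j, w i j * (y j : ℂ) := by
    intro i hi
    have h2 : (E.map Complex.ofReal)ᵀ.mulVec (w i) = Complex.exp ((t : ℂ) * lam i) • w i := by
      rw [hEC, ← Matrix.exp_transpose, Matrix.transpose_smul,
        exp_mulVec_eig (t • (A.map Complex.ofReal)ᵀ) (w i) ((t : ℂ) * lam i) ?_,
        Complex.exp_eq_exp_ℂ]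
      rw [Matrix.smul_mulVec, hw i hi]
      funext j
      simp [Complex.real_smul, mul_assoc]
    calc (∑ j, w i j * ((E.mulVec y) j : ℂ))
        = w i ⬝ᵥ (E.map Complex.ofReal).mulVec (fun j => (y j : ℂ)) := by
          congr 1
          funext j
          simp only [Matrix.mulVec, dotProduct, Matrix.map_apply]
          push_cast
          rfl
      _ = ((E.map Complex.ofReal)ᵀ.mulVec (w i)) ⬝ᵥ (fun j => (y j : ℂ)) := by
          rw [Matrix.dotProduct_mulVec, ← Matrix.mulVec_transpose]
      _ = Complex.exp (t * lam i) * ∑ j, w i j * (y j : ℂ) := by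
          rw [h2, smul_dotProduct]; rfl
  constructor
  · show (∑ i ∈ Finset.univ.erase (0 : Fin n),
        α i * ‖∑ j, w i j * ((E.mulVec y) j : ℂ)‖ ^ 2) ≤ _
    rw [hreal]
    have key : ∀ i ∈ Finset.univ.erase (0 : Fin n),
        α i * ‖∑ j, w i j * ((E.mulVec y) j : ℂ)‖ ^ 2
          ≤ Real.exp (t * l₁) ^ 2 * (α i * ‖∑ j, w i j * (y j : ℂ)‖ ^ 2) := by
      intro i hi
      have hi0 : i ≠ 0 := Finset.ne_of_mem_erase hi
      rw [hcx i hi0, norm_mul, Complex.norm_exp]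
      have hre : ((t : ℂ) * lam i).re = t * (lam i).re := by simp
      rw [hre, mul_pow]
      have hexp : Real.exp (t * (lam i).re) ≤ Real.exp (t * l₁) :=
        Real.exp_le_exp.mpr (mul_le_mul_of_nonneg_left (hdom i hi0).le ht)
      have h3 : Real.exp (t * (lam i).re) ^ 2 ≤ Real.exp (t * l₁) ^ 2 :=
        pow_le_pow_left₀ (Real.exp_nonneg _) hexp 2
      calc α i * (Real.exp (t * (lam i).re) ^ 2 * ‖∑ j, w i j * (y j : ℂ)‖ ^ 2)
          ≤ α i * (Real.exp (t * l₁) ^ 2 * ‖∑ j, w i j * (y j : ℂ)‖ ^ 2) := by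
            apply mul_le_mul_of_nonneg_left _ (hα i hi0).le
            exact mul_le_mul_of_nonneg_right h3 (sq_nonneg _)
        _ = Real.exp (t * l₁) ^ 2 * (α i * ‖∑ j, w i j * (y j : ℂ)‖ ^ 2) := by ring
    calc (∑ i ∈ Finset.univ.erase (0 : Fin n),
        α i * ‖∑ j, w i j * ((E.mulVec y) j : ℂ)‖ ^ 2)
        ≤ ∑ i ∈ Finset.univ.erase (0 : Fin n),
            Real.exp (t * l₁) ^ 2 * (α i * ‖∑ j, w i j * (y j : ℂ)‖ ^ 2) :=
          Finset.sum_le_sum key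
      _ = Real.exp (t * l₁) ^ 2 * ∑ i ∈ Finset.univ.erase (0 : Fin n),
            α i * ‖∑ j, w i j * (y j : ℂ)‖ ^ 2 := (Finset.mul_sum _ _ _).symm
      _ ≤ Real.exp (t * l₁) ^ 2 * (∑ j, w1 j * y j) ^ 2 :=
          mul_le_mul_of_nonneg_left hy1 (sq_nonneg _)
      _ = (Real.exp (t * l₁) * ∑ j, w1 j * y j) ^ 2 := by ring
  · show 0 ≤ ∑ j, w1 j * (E.mulVec y) j
    rw [hreal]
    exact mul_nonneg (Real.exp_nonneg _) hy2
end

section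
/- Let A ∈ ℝ^{n×n} be diagonalizable over ℂ and suppose its eigenvalue λ₁ of maximal real part is simple, real, negative, and satisfies λ₁ > Re(λⱼ) for every other eigenvalue λⱼ. Then there exists an invertible matrix S ∈ ℝ^{n×n} such that the system ż = S⁻¹AS z is eventually positive, i.e., for every z ∈ ℝⁿ with z ≥ 0 entrywise there exists τ₀ ≥ 0 such that e^{(S⁻¹AS)t} z ≥ 0 entrywise for all t ≥ τ₀. -/
open Polynomial Matrix Filter

set_option maxHeartbeats 1000000

attribute [local instance] Matrix.linftyOpNormedAddCommGroup Matrix.linftyOpNormedRing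
  Matrix.linftyOpNormedAlgebra

theorem charpoly_diag_aux {n : Type*} [Fintype n] [DecidableEq n] {R : Type*} [CommRing R]
    (d : n → R) :
    (Matrix.diagonal d).charpoly = ∏ i, (X - C (d i)) := by
  have h : charmatrix (Matrix.diagonal d) = Matrix.diagonal (fun i => (X : R[X]) - C (d i)) := by
    ext i j
    by_cases h : i = j
    · subst h; simp [charmatrix_apply_eq]
    · simp [charmatrix_apply_ne _ _ _ h, Matrix.diagonal_apply_ne _ h]
  rw [Matrix.charpoly, h, Matrix.det_diagonal]

theorem charpoly_conj_aux {n : Type*} [Fintype n] [DecidableEq n] {R : Type*} [CommRing R]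
    (P M : Matrix n n R) (hP : IsUnit P.det) :
    (P⁻¹ * M * P).charpoly = M.charpoly := by
  have hPC : IsUnit ((P.map (C : R →+* R[X])).det) := by
    have : (C : R →+* R[X]) P.det = (P.map (C : R →+* R[X])).det := RingHom.map_det _ _
    rw [← this]
    exact hP.map C
  have hinv : (P⁻¹).map (C : R →+* R[X]) = (P.map (C : R →+* R[X]))⁻¹ := by
    symm
    apply Matrix.inv_eq_right_inv
    rw [← Matrix.map_mul, Matrix.mul_nonsing_inv _ hP, Matrix.map_one _ (map_zero C) (map_one C)]
  have key : charmatrix (P⁻¹ * M * P) =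
      (P.map (C : R →+* R[X]))⁻¹ * charmatrix M * P.map (C : R →+* R[X]) := by
    have h1 : (P⁻¹ * M * P).map (C : R →+* R[X]) =
        (P.map (C : R →+* R[X]))⁻¹ * M.map (C : R →+* R[X]) * P.map (C : R →+* R[X]) := by
      rw [Matrix.map_mul, Matrix.map_mul, hinv]
    have hcomm : ∀ N : Matrix n n R[X], Matrix.scalar n (X : R[X]) * N = N * Matrix.scalar n X :=
      fun N => (Matrix.scalar_commute (X : R[X]) (fun r' => mul_comm _ _) N)
    rw [charmatrix, charmatrix, RingHom.mapMatrix_apply, RingHom.mapMatrix_apply, h1,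
      Matrix.mul_sub, Matrix.sub_mul]
    congr 1
    rw [Matrix.mul_assoc, hcomm, ← Matrix.mul_assoc, Matrix.nonsing_inv_mul _ hPC,
      Matrix.one_mul]
  rw [Matrix.charpoly, key, Matrix.det_mul, Matrix.det_mul, mul_comm, ← mul_assoc,
    ← Matrix.det_mul, Matrix.mul_nonsing_inv _ hPC, Matrix.det_one, one_mul]
  rfl

theorem colrow_mulVec {n : ℕ} {R : Type*} [CommRing R] (x y z : Fin n → R) :
    (Matrix.replicateCol Unit x * Matrix.replicateRow Unit y) *ᵥ z = (y ⬝ᵥ z) • x := by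
  ext i
  simp [Matrix.mulVec, dotProduct, Matrix.mul_apply, Matrix.replicateCol_apply, Matrix.replicateRow_apply,
    Finset.mul_sum, Finset.sum_mul, mul_comm, mul_assoc, mul_left_comm]

theorem vecMul_colrow {n : ℕ} {R : Type*} [CommRing R] (a x y : Fin n → R) :
    a ᵥ* (Matrix.replicateCol Unit x * Matrix.replicateRow Unit y) = (a ⬝ᵥ x) • y := by
  ext j
  simp [Matrix.vecMul, dotProduct, Matrix.mul_apply, Matrix.replicateCol_apply, Matrix.replicateRow_apply,
    Finset.mul_sum, Finset.sum_mul, mul_comm, mul_assoc, mul_left_comm]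

theorem exp_formula_aux {n : ℕ} (B : Matrix (Fin n) (Fin n) ℝ) (Q R : Matrix (Fin n) (Fin n) ℂ)
    (hQR : Q * R = 1) (hRQ : R * Q = 1) (d : Fin n → ℂ)
    (hB : B.map Complex.ofReal = Q * Matrix.diagonal d * R) (t : ℝ) (z : Fin n → ℝ) (i : Fin n) :
    (((NormedSpace.exp (t • B)).mulVec z i : ℝ) : ℂ)
      = ∑ k, Q i k * (Complex.exp (t * d k) * ((R *ᵥ (fun j => ((z j : ℝ) : ℂ))) k)) := by
  have hmap : (NormedSpace.exp (t • B)).map Complex.ofReal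
      = NormedSpace.exp (t • B.map Complex.ofReal) := by
    have h1 : (t • B).map (Complex.ofRealHom : ℝ →+* ℂ) = t • B.map Complex.ofRealHom := by
      ext i j
      simp [Complex.real_smul]
    have h2 := NormedSpace.map_exp ((Complex.ofRealHom : ℝ →+* ℂ).mapMatrix)
      (by exact continuous_id.matrix_map Complex.continuous_ofReal) (t • B)
    simp [RingHom.mapMatrix_apply, h1] at h2
    exact h2
  have hexpC : NormedSpace.exp (t • B.map Complex.ofReal)
      = NormedSpace.exp (t • B.map Complex.ofReal) :=
    rfl
  have hdg : Matrix.diagonal (fun k => (t : ℂ) * d k) = t • Matrix.diagonal d := by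
    have : (fun k => (t : ℂ) * d k) = t • d := by
      funext k; simp [Complex.real_smul]
    rw [this, Matrix.diagonal_smul]
  have hconj : t • B.map Complex.ofReal
      = Q * Matrix.diagonal (fun k => (t : ℂ) * d k) * R := by
    rw [hB, hdg, Matrix.mul_smul, Matrix.smul_mul]
  have hexpdiag : NormedSpace.exp (Q * Matrix.diagonal (fun k => (t : ℂ) * d k) * R)
      = Q * Matrix.diagonal (fun k => Complex.exp ((t : ℂ) * d k)) * R := by
    let u : (Matrix (Fin n) (Fin n) ℂ)ˣ := ⟨Q, R, hQR, hRQ⟩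
    have := Matrix.exp_units_conj u (Matrix.diagonal (fun k => (t : ℂ) * d k))
    rw [show (↑u : Matrix (Fin n) (Fin n) ℂ) = Q from rfl] at this
    have hinv : (↑u⁻¹ : Matrix (Fin n) (Fin n) ℂ) = R := rfl
    rw [hinv] at this
    have hfun : (fun i => NormedSpace.exp ((t : ℂ) * d i))
        = (fun k => Complex.exp ((t : ℂ) * d k)) :=
      funext fun k => (congrFun Complex.exp_eq_exp_ℂ _).symm
    rw [this, Matrix.exp_diagonal, Pi.exp_def, hfun]
  have key : (NormedSpace.exp (t • B)).map Complex.ofReal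
      = Q * Matrix.diagonal (fun k => Complex.exp ((t : ℂ) * d k)) * R := by
    rw [hmap, hexpC, hconj, hexpdiag]
  have hv := RingHom.map_mulVec (Complex.ofRealHom : ℝ →+* ℂ) (NormedSpace.exp (t • B)) z i
  rw [show ((Complex.ofRealHom : ℝ →+* ℂ) ∘ z) = (fun j => ((z j : ℝ) : ℂ)) from rfl] at hv
  have heq : (NormedSpace.exp (t • B)).map Complex.ofRealHom
      = (NormedSpace.exp (t • B)).map Complex.ofReal := rfl
  rw [heq, key] at hv
  rw [show ((((NormedSpace.exp (t • B)).mulVec z i : ℝ)) : ℂ)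
      = (Complex.ofRealHom : ℝ →+* ℂ) ((NormedSpace.exp (t • B)).mulVec z i) from rfl, hv]
  rw [← Matrix.mulVec_mulVec, ← Matrix.mulVec_mulVec]
  simp [Matrix.mulVec, dotProduct, Matrix.diagonal_apply, ite_mul, zero_mul,
    Finset.sum_ite_eq, Finset.sum_ite_eq']

theorem tendsto_exp_term_aux (l₁ : ℝ) (μ : ℂ) (h : μ.re < l₁) :
    Filter.Tendsto (fun t : ℝ => Complex.exp (↑t * (μ - ↑l₁))) Filter.atTop (nhds 0) := by
  rw [tendsto_zero_iff_norm_tendsto_zero]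
  have hnorm : (fun t : ℝ => ‖Complex.exp (↑t * (μ - ↑l₁))‖)
      = fun t : ℝ => Real.exp (t * (μ.re - l₁)) := by
    funext t
    rw [Complex.norm_exp]
    congr 1
    simp [Complex.mul_re]
  rw [hnorm]
  exact Real.tendsto_exp_atBot.comp (tendsto_id.atTop_mul_const_of_neg (by linarith))

theorem eventually_pos_aux {n : ℕ} (B : Matrix (Fin n) (Fin n) ℝ)
    (Q R : Matrix (Fin n) (Fin n) ℂ) (hQR : Q * R = 1) (hRQ : R * Q = 1)
    (d : Fin n → ℂ) (hB : B.map Complex.ofReal = Q * Matrix.diagonal d * R)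
    (l₁ : ℝ) (i₀ : Fin n) (hdi : d i₀ = (l₁ : ℂ)) (hdj : ∀ j, j ≠ i₀ → (d j).re < l₁)
    (z : Fin n → ℝ)
    (hL : ∀ i, 0 < (Q i i₀ * ((R *ᵥ (fun j => ((z j : ℝ) : ℂ))) i₀)).re) :
    ∃ τ₀ : ℝ, 0 ≤ τ₀ ∧ ∀ t : ℝ, τ₀ ≤ t → 0 ≤ (NormedSpace.exp (t • B)).mulVec z := by
  set zc : Fin n → ℂ := fun j => ((z j : ℝ) : ℂ) with hzc
  set yz : Fin n → ℂ := R *ᵥ zc with hyz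
  -- the rescaled function
  set G : Fin n → ℝ → ℂ := fun i t => ∑ k, (Q i k * yz k) * Complex.exp (↑t * (d k - ↑l₁))
    with hG
  have hGlim : ∀ i, Tendsto (fun t => (G i t).re) atTop (nhds ((Q i i₀ * yz i₀).re)) := by
    intro i
    have hsum : Tendsto (G i) atTop
        (nhds (∑ k, if k = i₀ then Q i i₀ * yz i₀ else 0)) := by
      apply tendsto_finset_sum
      intro k _
      by_cases hk : k = i₀
      · subst hk
        simp only [hdi, sub_self, mul_zero, Complex.exp_zero, mul_one, if_pos rfl]
        exact tendsto_const_nhds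
      · simp only [if_neg hk]
        have := (tendsto_exp_term_aux l₁ (d k) (hdj k hk)).const_mul (Q i k * yz k)
        simpa using this
      
    have hsimp : (∑ k, if k = i₀ then Q i i₀ * yz i₀ else 0) = Q i i₀ * yz i₀ := by
      simp
    rw [hsimp] at hsum
    exact (Complex.continuous_re.tendsto _).comp hsum
  have hformula : ∀ t : ℝ, ∀ i, ((NormedSpace.exp (t • B)).mulVec z i : ℝ)
      = Real.exp (t * l₁) * (G i t).re := by
    intro t i
    have h1 := exp_formula_aux B Q R hQR hRQ d hB t z i
    have h2 : (∑ k, Q i k * (Complex.exp (t * d k) * yz k))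
        = (Real.exp (t * l₁) : ℂ) * G i t := by
      rw [hG, Finset.mul_sum]
      apply Finset.sum_congr rfl
      intro k _
      rw [Complex.ofReal_exp]
      rw [show ((t : ℂ) * d k) = (↑(t * l₁) + ↑t * (d k - ↑l₁)) by push_cast; ring]
      rw [Complex.exp_add]
      ring
    rw [h2] at h1
    have h3 := congrArg Complex.re h1
    simp only [Complex.ofReal_re, Complex.re_ofReal_mul] at h3
    exact h3
  have hev : ∀ᶠ t in (atTop : Filter ℝ), ∀ i, 0 ≤ (NormedSpace.exp (t • B)).mulVec z i := by
    rw [eventually_all]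
    intro i
    have hpos := (hGlim i).eventually (eventually_gt_nhds (hL i))
    filter_upwards [hpos] with t ht
    rw [hformula t i]
    positivity
  obtain ⟨a, ha⟩ := eventually_atTop.mp hev
  refine ⟨max a 0, le_max_right _ _, fun t ht => ?_⟩
  have := ha t (le_trans (le_max_left _ _) ht)
  intro i
  exact this i

/-- If `A` is diagonalizable over `ℂ` and its dominant eigenvalue `λ₁` is simple, real,
negative, with `λ₁ > Re λⱼ` for every other eigenvalue, then there exists an invertible
matrix `S` such that the system `ż = S⁻¹AS z` is eventually positive. -/
theorem stmt_5 {n : ℕ} (A : Matrix (Fin n) (Fin n) ℝ)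
    (hdiag : ∃ P : Matrix (Fin n) (Fin n) ℂ, IsUnit P.det ∧
      (P⁻¹ * A.map Complex.ofReal * P).IsDiag)
    (l₁ : ℝ) (hroot : (Matrix.charpoly (A.map Complex.ofReal)).IsRoot (l₁ : ℂ))
    (hneg : l₁ < 0)
    (hsimple : Polynomial.rootMultiplicity (l₁ : ℂ)
      (Matrix.charpoly (A.map Complex.ofReal)) = 1)
    (hdom : ∀ μ : ℂ, (Matrix.charpoly (A.map Complex.ofReal)).IsRoot μ → μ ≠ (l₁ : ℂ) →
      μ.re < l₁) :
    ∃ S : Matrix (Fin n) (Fin n) ℝ, IsUnit S.det ∧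
      ∀ z : Fin n → ℝ, 0 ≤ z → ∃ τ₀ : ℝ, 0 ≤ τ₀ ∧ ∀ t : ℝ, τ₀ ≤ t →
        0 ≤ (NormedSpace.exp (t • (S⁻¹ * A * S))).mulVec z := by
  classical
  obtain ⟨P, hP, hDdiag⟩ := hdiag
  set Ac : Matrix (Fin n) (Fin n) ℂ := A.map Complex.ofReal with hAcdef
  rcases Nat.eq_zero_or_pos n with hn | hn
  · subst hn
    exact ⟨1, by simp, fun z hz => ⟨0, le_refl 0, fun t ht =>
      le_of_eq (Subsingleton.elim _ _)⟩⟩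
  have hnR : (0 : ℝ) < n := by exact_mod_cast hn
  -- diagonal form
  set d : Fin n → ℂ := Matrix.diag (P⁻¹ * Ac * P) with hddef
  have hD : P⁻¹ * Ac * P = Matrix.diagonal d := (Matrix.IsDiag.diagonal_diag hDdiag).symm
  have hAcd : Ac = P * Matrix.diagonal d * P⁻¹ := by
    have h1 : P * (P⁻¹ * Ac * P) * P⁻¹ = Ac := by
      simp only [← Matrix.mul_assoc]
      rw [Matrix.mul_nonsing_inv _ hP, Matrix.one_mul, Matrix.mul_assoc,
        Matrix.mul_nonsing_inv _ hP, Matrix.mul_one]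
    rw [← h1, hD]
  -- characteristic polynomial as a product
  have hchar : Ac.charpoly = ∏ i, (X - C (d i)) := by
    rw [← charpoly_conj_aux P Ac hP, hD, charpoly_diag_aux]
  have hroots : Ac.charpoly.roots = Multiset.map d Finset.univ.val := by
    rw [hchar, Finset.prod_eq_multiset_prod]
    rw [show Multiset.map (fun i => X - C (d i)) Finset.univ.val
        = Multiset.map (fun a => X - C a) (Multiset.map d Finset.univ.val) by
      rw [Multiset.map_map]; rfl]
    exact Polynomial.roots_multiset_prod_X_sub_C _
  have hcount : Multiset.count ((l₁ : ℝ) : ℂ) (Multiset.map d Finset.univ.val) = 1 := by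
    rw [← hroots, Polynomial.count_roots]; exact hsimple
  rw [Multiset.count_map] at hcount
  obtain ⟨i₀, hfil⟩ := Multiset.card_eq_one.mp hcount
  have hmemfil : ∀ j, d j = ((l₁ : ℝ) : ℂ) →
      j ∈ Multiset.filter (fun x => ((l₁ : ℝ) : ℂ) = d x) Finset.univ.val := by
    intro j hj
    exact Multiset.mem_filter.mpr ⟨Finset.mem_univ_val _, hj.symm⟩
  have hi₀fil : i₀ ∈ Multiset.filter (fun x => ((l₁ : ℝ) : ℂ) = d x) Finset.univ.val := by
    rw [hfil]; exact Multiset.mem_singleton_self _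
  have hdi : d i₀ = ((l₁ : ℝ) : ℂ) := ((Multiset.mem_filter.mp hi₀fil).2).symm
  have huniq : ∀ j, d j = ((l₁ : ℝ) : ℂ) → j = i₀ := by
    intro j hj
    have := hmemfil j hj
    rw [hfil] at this
    exact Multiset.mem_singleton.mp this
  have hdj : ∀ j, j ≠ i₀ → (d j).re < l₁ := by
    intro j hj
    refine hdom (d j) ?_ (fun heq => hj (huniq j heq))
    rw [Polynomial.IsRoot, hchar, Polynomial.eval_prod]
    apply Finset.prod_eq_zero (Finset.mem_univ j)
    simp
  -- real eigenvalue equation for A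
  have hevalA : (A.charpoly).eval l₁ = 0 := by
    have hACeq : Ac = A.map (Complex.ofRealHom : ℝ →+* ℂ) := rfl
    have hmapc : Ac.charpoly = (A.charpoly).map (Complex.ofRealHom : ℝ →+* ℂ) := by
      rw [hACeq]; exact Matrix.charpoly_map A (Complex.ofRealHom : ℝ →+* ℂ)
    have := hroot
    rw [Polynomial.IsRoot, hmapc, Polynomial.eval_map,
      show ((l₁ : ℝ) : ℂ) = (Complex.ofRealHom : ℝ →+* ℂ) l₁ from rfl,
      Polynomial.eval₂_at_apply] at this
    simpa using this
  have hdet : (l₁ • (1 : Matrix (Fin n) (Fin n) ℝ) - A).det = 0 := by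
    have h1 : (Polynomial.evalRingHom l₁) (A.charpoly)
        = ((charmatrix A).map (Polynomial.evalRingHom l₁)).det := by
      rw [Matrix.charpoly]; exact RingHom.map_det _ _
    have h2 : (charmatrix A).map (Polynomial.evalRingHom l₁)
        = l₁ • (1 : Matrix (Fin n) (Fin n) ℝ) - A := by
      ext i j
      by_cases h : i = j
      · subst h
        simp [charmatrix_apply_eq, Matrix.one_apply_eq]
      · simp [charmatrix_apply_ne _ _ _ h, Matrix.one_apply_ne h]
    rw [← h2, ← h1]
    exact hevalA
  obtain ⟨v, hv0, hveq⟩ := (Matrix.exists_mulVec_eq_zero_iff).mpr hdet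
  have hvA : A *ᵥ v = l₁ • v := by
    have : l₁ • v - A *ᵥ v = 0 := by
      simpa [Matrix.sub_mulVec, Matrix.smul_mulVec, Matrix.one_mulVec] using hveq
    exact (sub_eq_zero.mp this).symm
  -- left eigenvector
  have hdetT : (l₁ • (1 : Matrix (Fin n) (Fin n) ℝ) - Aᵀ).det = 0 := by
    rw [show l₁ • (1 : Matrix (Fin n) (Fin n) ℝ) - Aᵀ = (l₁ • 1 - A)ᵀ by
      rw [Matrix.transpose_sub, Matrix.transpose_smul, Matrix.transpose_one]]
    rw [Matrix.det_transpose]; exact hdet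
  obtain ⟨w0, hw00, hw0eq⟩ := (Matrix.exists_mulVec_eq_zero_iff).mpr hdetT
  have hw0A : Aᵀ *ᵥ w0 = l₁ • w0 := by
    have h : l₁ • w0 - Aᵀ *ᵥ w0 = 0 := by
      simpa [Matrix.sub_mulVec, Matrix.smul_mulVec, Matrix.one_mulVec] using hw0eq
    exact (sub_eq_zero.mp h).symm
  -- complexification
  set cplx : (Fin n → ℝ) → (Fin n → ℂ) := fun f j => ((f j : ℝ) : ℂ) with hcplx
  have hmulVecC : ∀ (M : Matrix (Fin n) (Fin n) ℝ) (x : Fin n → ℝ),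
      (M.map Complex.ofReal) *ᵥ (cplx x) = cplx (M *ᵥ x) := by
    intro M x; funext i
    exact (RingHom.map_mulVec (Complex.ofRealHom : ℝ →+* ℂ) M x i).symm
  have hsmulC : ∀ x : Fin n → ℝ, cplx (l₁ • x) = ((l₁ : ℝ) : ℂ) • cplx x := by
    intro x; funext j; simp [hcplx, Complex.real_smul]
  have hvc : Ac *ᵥ (cplx v) = ((l₁ : ℝ) : ℂ) • (cplx v) := by
    rw [show Ac = A.map Complex.ofReal from rfl, hmulVecC A v, hvA, hsmulC]
  set y : Fin n → ℂ := P⁻¹ *ᵥ (cplx v) with hy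
  have hvy : P *ᵥ y = cplx v := by
    rw [hy, Matrix.mulVec_mulVec, Matrix.mul_nonsing_inv _ hP, Matrix.one_mulVec]
  have hDy : Matrix.diagonal d *ᵥ y = ((l₁ : ℝ) : ℂ) • y := by
    rw [← hD, hy, Matrix.mulVec_mulVec]
    have h : P⁻¹ * Ac * P * P⁻¹ = P⁻¹ * Ac := by
      rw [Matrix.mul_assoc (P⁻¹ * Ac), Matrix.mul_nonsing_inv _ hP, Matrix.mul_one]
    rw [h, ← Matrix.mulVec_mulVec, hvc, Matrix.mulVec_smul]
  have hyj : ∀ j, j ≠ i₀ → y j = 0 := by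
    intro j hj
    have h1 : d j * y j = ((l₁ : ℝ) : ℂ) * y j := by
      have h := congrFun hDy j
      simpa [Matrix.mulVec_diagonal] using h
    have h2 : (d j - ((l₁ : ℝ) : ℂ)) * y j = 0 := by linear_combination h1
    rcases mul_eq_zero.mp h2 with h3 | h3
    · exact absurd (huniq j (sub_eq_zero.mp h3)) hj
    · exact h3
  set c : ℂ := y i₀ with hc
  have hvc0 : cplx v ≠ 0 := by
    intro h; apply hv0; funext j
    have := congrFun h j
    simpa [hcplx, Complex.ofReal_eq_zero] using this
  have hc0 : c ≠ 0 := by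
    intro h0
    apply hvc0
    rw [← hvy]
    have hy0 : y = 0 := by
      funext j; by_cases hj : j = i₀
      · subst hj; exact h0
      · exact hyj j hj
    rw [hy0, Matrix.mulVec_zero]
  have hyeq : y = c • (Pi.single i₀ 1 : Fin n → ℂ) := by
    funext j
    by_cases hj : j = i₀
    · subst hj; simp [hc]
    · simp [hyj j hj, Pi.single_apply, hj]
  -- left eigenvectors: complex structure
  have hxw : ∀ w' : Fin n → ℝ, Aᵀ *ᵥ w' = l₁ • w' →
      (cplx w') ᵥ* P = (((cplx w') ᵥ* P) i₀) • (Pi.single i₀ 1 : Fin n → ℂ) := by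
    intro w' hw'
    have hwc : (cplx w') ᵥ* Ac = ((l₁ : ℝ) : ℂ) • (cplx w') := by
      have h1 : Acᵀ *ᵥ (cplx w') = ((l₁ : ℝ) : ℂ) • cplx w' := by
        have he : Acᵀ = (Aᵀ).map Complex.ofReal := (Matrix.transpose_map).symm
        rw [he, hmulVecC _ w', hw', hsmulC]
      rw [← Matrix.mulVec_transpose]
      exact h1
    have hxD : ((cplx w') ᵥ* P) ᵥ* Matrix.diagonal d = ((l₁ : ℝ) : ℂ) • ((cplx w') ᵥ* P) := by
      rw [← hD, Matrix.vecMul_vecMul]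
      have h : P * (P⁻¹ * Ac * P) = Ac * P := by
        simp only [← Matrix.mul_assoc]
        rw [Matrix.mul_nonsing_inv _ hP, Matrix.one_mul]
      rw [h, ← Matrix.vecMul_vecMul, hwc, Matrix.smul_vecMul]
    funext j
    by_cases hj : j = i₀
    · subst hj; simp
    · have h1 : ((cplx w') ᵥ* P) j * d j = ((l₁ : ℝ) : ℂ) * ((cplx w') ᵥ* P) j := by
        have h := congrFun hxD j
        simpa [Matrix.vecMul_diagonal] using h
      have h2 : (d j - ((l₁ : ℝ) : ℂ)) * ((cplx w') ᵥ* P) j = 0 := by linear_combination h1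
      rcases mul_eq_zero.mp h2 with h3 | h3
      · exact absurd (huniq j (sub_eq_zero.mp h3)) hj
      · simp [h3, Pi.single_apply, hj]
  have hdotc : ∀ w' : Fin n → ℝ, Aᵀ *ᵥ w' = l₁ • w' →
      ((w' ⬝ᵥ v : ℝ) : ℂ) = ((cplx w') ᵥ* P) i₀ * c := by
    intro w' hw'
    have h1 : ((w' ⬝ᵥ v : ℝ) : ℂ) = (cplx w') ⬝ᵥ (cplx v) := by
      exact RingHom.map_dotProduct (Complex.ofRealHom : ℝ →+* ℂ) w' v
    rw [h1, ← hvy, Matrix.dotProduct_mulVec, hxw w' hw', hyeq]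
    simp [smul_dotProduct, dotProduct_smul, Pi.single_apply, mul_comm]
  have hα0 : (w0 ⬝ᵥ v) ≠ 0 := by
    intro h0
    have h1 := hdotc w0 hw0A
    rw [h0] at h1
    have h2 : ((cplx w0) ᵥ* P) i₀ = 0 := by
      rcases mul_eq_zero.mp h1.symm with h | h
      · exact h
      · exact absurd h hc0
    have h3 : (cplx w0) ᵥ* P = 0 := by
      rw [hxw w0 hw0A, h2, zero_smul]
    have h4 : cplx w0 = 0 := by
      have h5 := congrArg (fun u => u ᵥ* P⁻¹) h3
      simpa [Matrix.vecMul_vecMul, Matrix.mul_nonsing_inv _ hP, Matrix.vecMul_one,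
        Matrix.zero_vecMul] using h5
    apply hw00; funext j
    have := congrFun h4 j
    simpa [hcplx, Complex.ofReal_eq_zero] using this
  obtain ⟨w, hwA, hαpos⟩ : ∃ w : Fin n → ℝ, Aᵀ *ᵥ w = l₁ • w ∧ 0 < w ⬝ᵥ v := by
    rcases lt_or_gt_of_ne hα0 with h | h
    · refine ⟨-w0, ?_, ?_⟩
      · rw [Matrix.mulVec_neg, hw0A, smul_neg]
      · rw [neg_dotProduct]; linarith
    · exact ⟨w0, hw0A, h⟩
  set α : ℝ := w ⬝ᵥ v with hα
  set c' : ℂ := ((cplx w) ᵥ* P) i₀ with hc'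
  have hxweq : (cplx w) ᵥ* P = c' • (Pi.single i₀ 1 : Fin n → ℂ) := hxw w hwA
  have hcc' : ((α : ℝ) : ℂ) = c' * c := hdotc w hwA
  have hα0' : α ≠ 0 := ne_of_gt hαpos
  have hc'0 : c' ≠ 0 := by
    intro h0
    rw [h0, zero_mul] at hcc'
    exact hα0' (by exact_mod_cast hcc')
  -- construction of S
  obtain ⟨b, hb⟩ : ∃ b, v b ≠ 0 := Function.ne_iff.mp hv0
  set u : Fin n → ℝ := fun _ => 1 with hu
  set S₁ : Matrix (Fin n) (Fin n) ℝ :=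
    1 + Matrix.replicateCol Unit (v - u) * Matrix.replicateRow Unit (Pi.single b (1:ℝ)) with hS₁
  have hS₁u : S₁ *ᵥ u = v := by
    rw [hS₁, Matrix.add_mulVec, Matrix.one_mulVec, colrow_mulVec]
    have h : (Pi.single b (1:ℝ)) ⬝ᵥ u = 1 := by
      rw [single_dotProduct]; simp [hu]
    rw [h, one_smul]
    abel
  have hdetS₁ : S₁.det = v b := by
    rw [hS₁, Matrix.det_one_add_replicateCol_mul_replicateRow, single_dotProduct]
    simp [hu]
  set w₁ : Fin n → ℝ := w ᵥ* S₁ with hw₁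
  have hw₁u : w₁ ⬝ᵥ u = α := by
    rw [hw₁, ← Matrix.dotProduct_mulVec, hS₁u, hα]
  set wt : Fin n → ℝ := fun _ => α / n with hwt
  have hwtu : wt ⬝ᵥ u = α := by
    simp only [hwt, hu, dotProduct, mul_one, Finset.sum_const, Finset.card_univ,
      Fintype.card_fin, nsmul_eq_mul]
    field_simp
  set dd : Fin n → ℝ := wt - w₁ with hdd
  have hddu : dd ⬝ᵥ u = 0 := by rw [hdd, sub_dotProduct, hwtu, hw₁u, sub_self]
  set S₂ : Matrix (Fin n) (Fin n) ℝ :=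
    1 + Matrix.replicateCol Unit (α⁻¹ • u) * Matrix.replicateRow Unit dd with hS₂
  have hS₂u : S₂ *ᵥ u = u := by
    rw [hS₂, Matrix.add_mulVec, Matrix.one_mulVec, colrow_mulVec, hddu, zero_smul, add_zero]
  have hw₁S₂ : w₁ ᵥ* S₂ = wt := by
    rw [hS₂, Matrix.vecMul_add, Matrix.vecMul_one, vecMul_colrow]
    have h : w₁ ⬝ᵥ (α⁻¹ • u) = 1 := by
      rw [dotProduct_smul, hw₁u, smul_eq_mul, inv_mul_cancel₀ hα0']
    rw [h, one_smul, hdd]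
    abel
  have hdetS₂ : S₂.det = 1 := by
    rw [hS₂, Matrix.det_one_add_replicateCol_mul_replicateRow, dotProduct_smul, hddu, smul_zero, add_zero]
  set S : Matrix (Fin n) (Fin n) ℝ := S₁ * S₂ with hS
  have hdetS : IsUnit S.det := by
    rw [hS, Matrix.det_mul, hdetS₁, hdetS₂, mul_one]
    exact isUnit_iff_ne_zero.mpr hb
  have hSu : S *ᵥ u = v := by rw [hS, ← Matrix.mulVec_mulVec, hS₂u, hS₁u]
  have hwS : w ᵥ* S = wt := by rw [hS, ← Matrix.vecMul_vecMul, ← hw₁, hw₁S₂]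
  refine ⟨S, hdetS, ?_⟩
  intro z hz
  by_cases hz0 : z = 0
  · exact ⟨0, le_refl 0, fun t ht => by rw [hz0, Matrix.mulVec_zero]⟩
  -- complex versions
  have hmapmul : ∀ (M N : Matrix (Fin n) (Fin n) ℝ),
      (M * N).map Complex.ofReal = M.map Complex.ofReal * N.map Complex.ofReal :=
    fun M N => Matrix.map_mul (f := (Complex.ofRealHom : ℝ →+* ℂ))
  set Sc : Matrix (Fin n) (Fin n) ℂ := S.map Complex.ofReal with hSc
  have hScdet : IsUnit Sc.det := by
    have h : (Complex.ofRealHom : ℝ →+* ℂ) S.det = Sc.det := RingHom.map_det _ _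
    rw [← h]
    exact hdetS.map _
  have hSinvmap : (S⁻¹).map Complex.ofReal = Sc⁻¹ := by
    symm
    apply Matrix.inv_eq_right_inv
    rw [hSc, ← hmapmul, Matrix.mul_nonsing_inv _ hdetS,
      Matrix.map_one _ Complex.ofReal_zero Complex.ofReal_one]
  set Q : Matrix (Fin n) (Fin n) ℂ := Sc⁻¹ * P with hQdef
  set Rm : Matrix (Fin n) (Fin n) ℂ := P⁻¹ * Sc with hRmdef
  have hQR : Q * Rm = 1 := by
    rw [hQdef, hRmdef, Matrix.mul_assoc (Sc⁻¹) P (P⁻¹ * Sc), ← Matrix.mul_assoc P,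
      Matrix.mul_nonsing_inv _ hP, Matrix.one_mul, Matrix.nonsing_inv_mul _ hScdet]
  have hRQ : Rm * Q = 1 := by
    rw [hQdef, hRmdef, Matrix.mul_assoc (P⁻¹) Sc (Sc⁻¹ * P), ← Matrix.mul_assoc Sc,
      Matrix.mul_nonsing_inv _ hScdet, Matrix.one_mul, Matrix.nonsing_inv_mul _ hP]
  have hBmap : (S⁻¹ * A * S).map Complex.ofReal = Q * Matrix.diagonal d * Rm := by
    rw [hmapmul, hmapmul, hSinvmap, hQdef, hRmdef]
    rw [show A.map Complex.ofReal = Ac from rfl, hAcd]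
    simp only [Matrix.mul_assoc]
    rfl
  set zc : Fin n → ℂ := cplx z with hzcd
  have hQcol : ∀ i, Q i i₀ = c⁻¹ := by
    have hPe : P *ᵥ (Pi.single i₀ 1 : Fin n → ℂ) = c⁻¹ • cplx v := by
      have h1 : P *ᵥ y = cplx v := hvy
      rw [hyeq, Matrix.mulVec_smul] at h1
      rw [← h1, smul_smul, inv_mul_cancel₀ hc0, one_smul]
    have hScv : Sc⁻¹ *ᵥ cplx v = cplx u := by
      have h1 : Sc *ᵥ cplx u = cplx v := by rw [hSc, hmulVecC S u, hSu]
      rw [← h1, Matrix.mulVec_mulVec, Matrix.nonsing_inv_mul _ hScdet, Matrix.one_mulVec]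
    intro i
    have h2 : Q *ᵥ (Pi.single i₀ 1 : Fin n → ℂ) = c⁻¹ • cplx u := by
      rw [hQdef, ← Matrix.mulVec_mulVec, hPe, Matrix.mulVec_smul, hScv]
    have h3 := congrFun h2 i
    rw [Matrix.mulVec_single] at h3
    simpa [hcplx, hu] using h3
  have hPinv : (Pi.single i₀ 1 : Fin n → ℂ) ᵥ* P⁻¹ = c'⁻¹ • cplx w := by
    have h1 : (cplx w) ᵥ* P ᵥ* P⁻¹ = cplx w := by
      rw [Matrix.vecMul_vecMul, Matrix.mul_nonsing_inv _ hP, Matrix.vecMul_one]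
    rw [hxweq, Matrix.smul_vecMul] at h1
    rw [← h1, smul_smul, inv_mul_cancel₀ hc'0, one_smul]
  have hwSc : (cplx w) ᵥ* Sc = cplx wt := by
    funext j
    have h1 := RingHom.map_vecMul (Complex.ofRealHom : ℝ →+* ℂ) S w j
    rw [hwS] at h1
    exact h1.symm
  have h4 : (Pi.single i₀ 1 : Fin n → ℂ) ᵥ* Rm = c'⁻¹ • cplx wt := by
    rw [hRmdef, ← Matrix.vecMul_vecMul, hPinv, Matrix.smul_vecMul, hwSc]
  have h5 : (Rm *ᵥ zc) i₀ = c'⁻¹ * (((wt ⬝ᵥ z : ℝ)) : ℂ) := by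
    have h6 : (Rm *ᵥ zc) i₀ = (Pi.single i₀ 1 : Fin n → ℂ) ⬝ᵥ (Rm *ᵥ zc) := by
      rw [single_dotProduct, one_mul]
    have h7 : cplx wt ⬝ᵥ zc = (((wt ⬝ᵥ z : ℝ)) : ℂ) :=
      (RingHom.map_dotProduct (Complex.ofRealHom : ℝ →+* ℂ) wt z).symm
    rw [h6, Matrix.dotProduct_mulVec, h4, smul_dotProduct, h7, smul_eq_mul]
  have hβpos : 0 < wt ⬝ᵥ z := by
    obtain ⟨j0, hj0⟩ := Function.ne_iff.mp hz0
    have hzj : ∀ j, 0 ≤ z j := fun j => hz j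
    apply Finset.sum_pos'
    · intro j _
      exact mul_nonneg (le_of_lt (div_pos hαpos hnR)) (hzj j)
    · refine ⟨j0, Finset.mem_univ _, ?_⟩
      have : 0 < z j0 := lt_of_le_of_ne (hzj j0) (by simpa using (Ne.symm hj0))
      exact mul_pos (div_pos hαpos hnR) this
  have hL : ∀ i, 0 < (Q i i₀ * ((Rm *ᵥ zc) i₀)).re := by
    intro i
    rw [hQcol i, h5]
    have hval : c⁻¹ * (c'⁻¹ * (((wt ⬝ᵥ z : ℝ)) : ℂ)) = (((α⁻¹ * (wt ⬝ᵥ z) : ℝ)) : ℂ) := by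
      push_cast
      rw [show (((α : ℝ)) : ℂ)⁻¹ = (c' * c)⁻¹ from by rw [← hcc'], mul_inv]
      ring
    rw [hval, Complex.ofReal_re]
    exact mul_pos (inv_pos.mpr hαpos) hβpos
  exact eventually_pos_aux (S⁻¹ * A * S) Q Rm hQR hRQ d hBmap l₁ i₀ hdi hdj z hL
end

section
/- Let C ⊆ D be an open, forward-invariant set (φ(t,x) ∈ C for all t ≥ 0, x ∈ C), let K be a closed positive cone, suppose the map x ↦ φ(t,x) is continuously differentiable on C for each t ≥ 0, and suppose the system ẋ = f(x) is uniformly eventually monotone on C with respect to K, with uniform time τ₀ ≥ 0. If f(x) ∈ K for some x ∈ C, then f(φ(t,x)) ∈ K for all t ≥ τ₀; consequently φ(t + Δt, x) ⪰_K φ(t,x) for all Δt > 0 and t ≥ τ₀. -/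
open Set Filter Metric Topology

/-- Uniqueness of ODE solutions for a locally Lipschitz (C¹ on open set) vector field,
on an interval `[0, T]`, via a connectedness (sup) argument. -/
lemma ode_uniq_aux {n : ℕ} {D : Set (Fin n → ℝ)} (hD : IsOpen D)
    {f : (Fin n → ℝ) → (Fin n → ℝ)} (hf : ContDiffOn ℝ 1 f D)
    (u v : ℝ → (Fin n → ℝ)) (T : ℝ)
    (hu : ∀ r ∈ Icc (0:ℝ) T, HasDerivAt u (f (u r)) r)
    (huD : ∀ r ∈ Icc (0:ℝ) T, u r ∈ D)
    (hv : ∀ r ∈ Icc (0:ℝ) T, HasDerivAt v (f (v r)) r)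
    (hvD : ∀ r ∈ Icc (0:ℝ) T, v r ∈ D)
    (h0 : u 0 = v 0) : ∀ r ∈ Icc (0:ℝ) T, u r = v r := by
  rcases lt_or_ge T 0 with hT | hT
  · intro r hr; exact absurd (hr.1.trans hr.2) (not_le.2 hT)
  set A : Set ℝ := {r | r ∈ Icc (0:ℝ) T ∧ ∀ r' ∈ Icc (0:ℝ) r, u r' = v r'} with hAdef
  have h0A : (0:ℝ) ∈ A := by
    refine ⟨⟨le_rfl, hT⟩, fun r' hr' => ?_⟩
    have : r' = 0 := le_antisymm hr'.2 hr'.1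
    rw [this]; exact h0
  have hbdd : BddAbove A := ⟨T, fun r hr => hr.1.2⟩
  set m := sSup A with hm
  have hm0 : 0 ≤ m := le_csSup hbdd h0A
  have hmT : m ≤ T := csSup_le ⟨0, h0A⟩ (fun r hr => hr.1.2)
  have hmIcc : m ∈ Icc (0:ℝ) T := ⟨hm0, hmT⟩
  have hltm : ∀ r' : ℝ, 0 ≤ r' → r' < m → u r' = v r' := by
    intro r' h0r hr'
    obtain ⟨r, hrA, hrr⟩ := exists_lt_of_lt_csSup ⟨0, h0A⟩ hr'
    exact hrA.2 r' ⟨h0r, hrr.le⟩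
  have hum : u m = v m := by
    rcases eq_or_lt_of_le hm0 with h | h
    · rw [← h]; exact h0
    · have hne : (𝓝[Ico (0:ℝ) m] m).NeBot := by
        apply mem_closure_iff_nhdsWithin_neBot.mp
        rw [closure_Ico h.ne]
        exact ⟨hm0, le_rfl⟩
      have h1 : Tendsto u (𝓝[Ico (0:ℝ) m] m) (𝓝 (u m)) :=
        ((hu m hmIcc).continuousAt).continuousWithinAt
      have h2 : Tendsto v (𝓝[Ico (0:ℝ) m] m) (𝓝 (v m)) :=
        ((hv m hmIcc).continuousAt).continuousWithinAt
      have heq : v =ᶠ[𝓝[Ico (0:ℝ) m] m] u :=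
        eventuallyEq_of_mem self_mem_nhdsWithin
          (fun r hr => (hltm r hr.1 hr.2).symm)
      exact tendsto_nhds_unique h1 (h2.congr' heq)
  have hmA : ∀ r' ∈ Icc (0:ℝ) m, u r' = v r' := by
    intro r' hr'
    rcases eq_or_lt_of_le hr'.2 with heq | hlt'
    · rw [heq]; exact hum
    · exact hltm r' hr'.1 hlt'
  rcases eq_or_lt_of_le hmT with hfin | hmlt
  · intro r hr; exact hmA r ⟨hr.1, hfin ▸ hr.2⟩
  · exfalso
    have hpD : u m ∈ D := huD m hmIcc
    obtain ⟨L, sL, hsL, hlip⟩ :=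
      ((hf.contDiffAt (hD.mem_nhds hpD)).exists_lipschitzOnWith :
        ∃ L : NNReal, ∃ t ∈ 𝓝 (u m), LipschitzOnWith L f t)
    have e1 : ∀ᶠ r in 𝓝 m, u r ∈ sL := (hu m hmIcc).continuousAt.eventually_mem hsL
    have e2 : ∀ᶠ r in 𝓝 m, v r ∈ sL := by
      apply (hv m hmIcc).continuousAt.eventually_mem
      rwa [← hum]
    obtain ⟨δ, hδ, hδP⟩ := Metric.eventually_nhds_iff.mp (e1.and e2)
    set b := min (m + δ/2) T with hb
    have hmb : m < b := lt_min (by linarith) hmlt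
    have hbT : b ≤ T := min_le_right _ _
    have hsub : Icc m b ⊆ Icc (0:ℝ) T := Icc_subset_Icc hm0 hbT
    have hdist : ∀ r ∈ Ico m b, dist r m < δ := by
      intro r hr
      rw [Real.dist_eq, abs_of_nonneg (sub_nonneg.2 hr.1)]
      have : r < m + δ/2 := lt_of_lt_of_le hr.2 (min_le_left _ _)
      linarith
    have key : EqOn u v (Icc m b) := by
      refine ODE_solution_unique_of_mem_Icc_right
        (v := fun _ => f) (s := fun _ => sL) (fun _ _ => hlip)
        (fun r hr => ((hu r (hsub hr)).continuousAt).continuousWithinAt)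
        (fun r hr => (hu r (hsub (Ico_subset_Icc_self hr))).hasDerivWithinAt)
        (fun r hr => (hδP (hdist r hr)).1)
        (fun r hr => ((hv r (hsub hr)).continuousAt).continuousWithinAt)
        (fun r hr => (hv r (hsub (Ico_subset_Icc_self hr))).hasDerivWithinAt)
        (fun r hr => (hδP (hdist r hr)).2)
        hum
    have hbA : b ∈ A := by
      refine ⟨⟨hm0.trans hmb.le, hbT⟩, fun r' hr' => ?_⟩
      rcases le_or_gt r' m with h | h
      · exact hmA r' ⟨hr'.1, h⟩
      · exact key ⟨h.le, hr'.2⟩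
    exact absurd (le_csSup hbdd hbA) (not_le.2 hmb)

/-- For a uniformly eventually monotone system (with uniform time `τ₀`) on an open
forward-invariant set `C` with respect to a closed positive cone `K`, whose flow maps are
`C¹` on `C`: if `f(x) ∈ K` for some `x ∈ C`, then `f(φ(t,x)) ∈ K` for all `t ≥ τ₀`, and
consequently `φ(t+Δt,x) ⪰_K φ(t,x)` for all `Δt > 0` and `t ≥ τ₀`. -/
theorem stmt_8 {n : ℕ} (D : Set (Fin n → ℝ)) (hD : IsOpen D)
    (f : (Fin n → ℝ) → (Fin n → ℝ)) (hf : ContDiffOn ℝ 1 f D)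
    (φ : ℝ → (Fin n → ℝ) → (Fin n → ℝ))
    (hφ0 : ∀ x ∈ D, φ 0 x = x)
    (hφ' : ∀ x ∈ D, ∀ t : ℝ, 0 ≤ t → HasDerivAt (fun τ => φ τ x) (f (φ t x)) t)
    (C : Set (Fin n → ℝ)) (hCopen : IsOpen C) (hCD : C ⊆ D)
    (hCinv : ∀ t : ℝ, 0 ≤ t → ∀ x ∈ C, φ t x ∈ C)
    (K : Set (Fin n → ℝ)) (hKclosed : IsClosed K)
    (hKscale : ∀ c : ℝ, 0 ≤ c → ∀ x ∈ K, c • x ∈ K)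
    (hKadd : ∀ x ∈ K, ∀ y ∈ K, x + y ∈ K)
    (hKpointed : ∀ x ∈ K, -x ∈ K → x = 0)
    (hφC1 : ∀ t : ℝ, 0 ≤ t → ContDiffOn ℝ 1 (φ t) C)
    (τ₀ : ℝ) (hτ₀ : 0 ≤ τ₀)
    (hmon : ∀ x ∈ C, ∀ y ∈ C, x - y ∈ K → ∀ t : ℝ, τ₀ ≤ t → φ t x - φ t y ∈ K)
    (x : Fin n → ℝ) (hx : x ∈ C) (hfx : f x ∈ K) :
    (∀ t : ℝ, τ₀ ≤ t → f (φ t x) ∈ K) ∧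
    (∀ t : ℝ, τ₀ ≤ t → ∀ Δt : ℝ, 0 < Δt → φ (t + Δt) x - φ t x ∈ K) := by
  have hxD : x ∈ D := hCD hx
  -- semigroup property from uniqueness of solutions
  have hsemi : ∀ s : ℝ, 0 ≤ s → ∀ t : ℝ, 0 ≤ t → φ (t + s) x = φ t (φ s x) := by
    intro s hs t ht
    have hysC : φ s x ∈ C := hCinv s hs x hx
    have hysD : φ s x ∈ D := hCD hysC
    have hu : ∀ r ∈ Icc (0:ℝ) t, HasDerivAt (fun r => φ (r + s) x) (f (φ (r + s) x)) r := by
      intro r hr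
      have h1 : HasDerivAt (fun τ => φ τ x) (f (φ (r + s) x)) (r + s) :=
        hφ' x hxD (r + s) (by linarith [hr.1])
      have h2 := h1.scomp r ((hasDerivAt_id r).add_const s)
      simpa [Function.comp_def] using h2
    have := ode_uniq_aux hD hf (fun r => φ (r + s) x) (fun r => φ r (φ s x)) t
      hu
      (fun r hr => hCD (hCinv (r + s) (by linarith [hr.1]) x hx))
      (fun r hr => hφ' (φ s x) hysD r hr.1)
      (fun r hr => hCD (hCinv r hr.1 _ hysC))
      (by simp [hφ0 _ hysD])
      t ⟨ht, le_rfl⟩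
    simpa using this
  -- Part 1
  have part1 : ∀ t : ℝ, τ₀ ≤ t → f (φ t x) ∈ K := by
    intro t ht
    have ht0 : 0 ≤ t := hτ₀.trans ht
    have hdiff : DifferentiableAt ℝ (φ t) x :=
      (((hφC1 t ht0).contDiffAt (hCopen.mem_nhds hx)).differentiableAt one_ne_zero)
    have hfd : HasFDerivAt (φ t) (fderiv ℝ (φ t) x) x := hdiff.hasFDerivAt
    set A := fderiv ℝ (φ t) x with hAdef
    have h0x : φ 0 x = x := hφ0 x hxD
    have hin : HasDerivAt (fun s => φ s x) (f x) 0 := by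
      have := hφ' x hxD 0 le_rfl
      rwa [h0x] at this
    have hfd0 : HasFDerivAt (φ t) A (φ 0 x) := by rw [h0x]; exact hfd
    have hγ : HasDerivAt (fun s => φ t (φ s x)) (A (f x)) 0 :=
      hfd0.comp_hasDerivAt 0 hin
    have hδfun : HasDerivAt (fun s : ℝ => φ (t + s) x) (f (φ t x)) 0 := by
      have h1 : HasDerivAt (fun τ => φ τ x) (f (φ t x)) (t + 0) := by
        rw [add_zero]; exact hφ' x hxD t ht0
      have h2 := h1.scomp (0:ℝ) ((hasDerivAt_id (0:ℝ)).const_add t)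
      simpa [Function.comp_def] using h2
    have huniq : A (f x) = f (φ t x) := by
      have hγ' : HasDerivWithinAt (fun s : ℝ => φ (t + s) x) (A (f x)) (Ici 0) 0 :=
        (hγ.hasDerivWithinAt).congr
          (fun s hs => hsemi s hs t ht0)
          (hsemi 0 le_rfl t ht0)
      exact (uniqueDiffOn_Ici (0:ℝ) 0 self_mem_Ici).eq_deriv _ hγ' hδfun.hasDerivWithinAt
    rw [← huniq]
    -- A (f x) is the limit of slopes, each of which is in K
    have hβin : HasDerivAt (fun h : ℝ => x + h • f x) (f x) 0 := by
      simpa using ((hasDerivAt_id (0:ℝ)).smul_const (f x)).const_add x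
    have hβfd : HasFDerivAt (φ t) A (x + (0:ℝ) • f x) := by simpa using hfd
    have hβ : HasDerivAt (fun h : ℝ => φ t (x + h • f x)) (A (f x)) 0 :=
      hβfd.comp_hasDerivAt 0 hβin
    have hslope : Tendsto (slope (fun h : ℝ => φ t (x + h • f x)) 0)
        (𝓝[>] (0:ℝ)) (𝓝 (A (f x))) :=
      (hasDerivAt_iff_tendsto_slope.mp hβ).mono_left
        (nhdsWithin_mono 0 (fun h hh => ne_of_gt hh))
    refine hKclosed.mem_of_tendsto hslope ?_
    have hmemC : ∀ᶠ h : ℝ in 𝓝 0, x + h • f x ∈ C := by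
      have hcont : ContinuousAt (fun h : ℝ => x + h • f x) 0 := by fun_prop
      apply hcont.eventually_mem
      simpa using hCopen.mem_nhds hx
    filter_upwards [hmemC.filter_mono nhdsWithin_le_nhds, self_mem_nhdsWithin] with h hC hpos
    have hpos' : (0:ℝ) < h := hpos
    have h1 : (x + h • f x) - x ∈ K := by
      simpa using hKscale h hpos'.le _ hfx
    have h2 : φ t (x + h • f x) - φ t x ∈ K := hmon _ hC _ hx h1 t ht
    have h3 := hKscale h⁻¹ (inv_nonneg.2 hpos'.le) _ h2
    have hrw : slope (fun h : ℝ => φ t (x + h • f x)) 0 h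
        = h⁻¹ • (φ t (x + h • f x) - φ t x) := by
      simp [slope_def_module]
    rwa [hrw]
  refine ⟨part1, ?_⟩
  -- Part 2
  intro t ht Δt hΔt
  have ht0 : 0 ≤ t := hτ₀.trans ht
  have hle : t ≤ t + Δt := by linarith
  have hcontφ : ∀ s ∈ Icc t (t + Δt), HasDerivAt (fun τ => φ τ x) (f (φ s x)) s :=
    fun s hs => hφ' x hxD s (ht0.trans hs.1)
  have hgcont : ContinuousOn (fun s => f (φ s x)) (Icc t (t + Δt)) := by
    intro s hs
    have hφsD : φ s x ∈ D := hCD (hCinv s (ht0.trans hs.1) x hx)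
    have hc1 : ContinuousAt f (φ s x) := hf.continuousOn.continuousAt (hD.mem_nhds hφsD)
    have hc2 : ContinuousAt (fun τ => φ τ x) s := (hcontφ s hs).continuousAt
    exact (show ContinuousAt (fun τ => f (φ τ x)) s from hc1.tendsto.comp hc2).continuousWithinAt
  have hint : IntervalIntegrable (fun s => f (φ s x)) MeasureTheory.volume t (t + Δt) :=
    hgcont.intervalIntegrable_of_Icc hle
  have hftc : ∫ s in t..(t + Δt), f (φ s x) = φ (t + Δt) x - φ t x :=
    intervalIntegral.integral_eq_sub_of_hasDerivAt
      (fun s hs => hcontφ s (by rwa [uIcc_of_le hle] at hs)) hint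
  rw [← hftc, intervalIntegral.integral_of_le hle]
  have hKconv : Convex ℝ K := by
    intro p hp q hq a b ha hb hab
    exact hKadd _ (hKscale a ha p hp) _ (hKscale b hb q hq)
  have hμ0 : MeasureTheory.volume (Ioc t (t + Δt)) ≠ 0 := by
    rw [Real.volume_Ioc]
    simp only [ne_eq, ENNReal.ofReal_eq_zero, not_le]
    linarith
  have hμtop : MeasureTheory.volume (Ioc t (t + Δt)) ≠ ⊤ := by
    rw [Real.volume_Ioc]; exact ENNReal.ofReal_ne_top
  have hmem : ∀ᵐ s ∂(MeasureTheory.volume.restrict (Ioc t (t + Δt))), f (φ s x) ∈ K :=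
    (MeasureTheory.ae_restrict_iff' measurableSet_Ioc).2
      (MeasureTheory.ae_of_all _ fun s hs => part1 s (ht.trans hs.1.le))
  have hintg : MeasureTheory.IntegrableOn (fun s => f (φ s x)) (Ioc t (t + Δt)) := by
    exact (hgcont.integrableOn_Icc).mono_set Ioc_subset_Icc_self
  have havg := hKconv.set_average_mem hKclosed hμ0 hμtop hmem hintg
  rw [MeasureTheory.setAverage_eq] at havg
  have hμval : MeasureTheory.volume.real (Ioc t (t + Δt)) = Δt := by
    rw [MeasureTheory.measureReal_def, Real.volume_Ioc, ENNReal.toReal_ofReal (by linarith)]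
    ring
  rw [hμval] at havg
  have := hKscale Δt hΔt.le _ havg
  rwa [smul_inv_smul₀ (ne_of_gt hΔt)] at this
end

section
/- Let C ⊆ D be an open, forward-invariant set, let K be a closed positive cone, suppose x ↦ φ(t,x) is continuously differentiable on C for each t ≥ 0, and suppose the system ẋ = f(x) is uniformly eventually monotone on C with respect to K. Suppose x* ∈ C is an equilibrium (f(x*) = 0) whose basin of attraction B(x*) = { x ∈ C : φ(t,x) → x* as t → ∞ } is contained in C. Then for every x ∈ B(x*) with x ≻_K x*: f(x) ∉ K \ {0}, and φ(t,x) − x ∉ K \ {0} for every t > 0. -/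
open Set Filter Topology Metric

/-- Uniqueness of ODE solutions on `[0,b]` for a `C¹` field on an open set. -/
lemma ode_unique_aux {E : Type*} [NormedAddCommGroup E] [NormedSpace ℝ E]
    {D : Set E} (hD : IsOpen D) {f : E → E} (hf : ContDiffOn ℝ 1 f D)
    {y z : ℝ → E} {b : ℝ} (hb : 0 ≤ b)
    (hy : ∀ t ∈ Icc (0:ℝ) b, HasDerivAt y (f (y t)) t)
    (hyD : ∀ t ∈ Icc (0:ℝ) b, y t ∈ D)
    (hz : ∀ t ∈ Icc (0:ℝ) b, HasDerivAt z (f (z t)) t)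
    (hzD : ∀ t ∈ Icc (0:ℝ) b, z t ∈ D)
    (h0 : y 0 = z 0) : EqOn y z (Icc 0 b) := by
  have spread : ∀ s₀ ∈ Icc (0:ℝ) b, y s₀ = z s₀ → s₀ < b →
      ∃ s₁, s₀ < s₁ ∧ s₁ ≤ b ∧ EqOn y z (Icc s₀ s₁) := by
    intro s₀ hs₀ heq hlt
    obtain ⟨L, U, hU, hLip⟩ :=
      ((hf.contDiffAt (hD.mem_nhds (hyD s₀ hs₀)))).exists_lipschitzOnWith
    have h1 : ∀ᶠ s in 𝓝 s₀, y s ∈ U := (hy s₀ hs₀).continuousAt.eventually_mem hU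
    have h2 : ∀ᶠ s in 𝓝 s₀, z s ∈ U := (hz s₀ hs₀).continuousAt.eventually_mem (heq ▸ hU)
    obtain ⟨δ, hδ, hball⟩ := Metric.eventually_nhds_iff.mp (h1.and h2)
    set s₁ := min b (s₀ + δ/2) with hs₁def
    have hs₀s₁ : s₀ < s₁ := lt_min hlt (by linarith)
    have hsub : Icc s₀ s₁ ⊆ Icc 0 b := Icc_subset_Icc hs₀.1 (min_le_left _ _)
    have hballmem : ∀ s ∈ Icc s₀ s₁, y s ∈ U ∧ z s ∈ U := by
      intro s hs
      apply hball
      have h3 : s ≤ s₀ + δ/2 := le_trans hs.2 (min_le_right _ _)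
      rw [Real.dist_eq, abs_lt]
      constructor <;> [linarith [hs.1]; linarith [hs.1]]
    refine ⟨s₁, hs₀s₁, min_le_left _ _, ?_⟩
    refine ODE_solution_unique_of_mem_Icc_right (v := fun _ => f) (s := fun _ => U)
      (K := L) (fun _ _ => hLip) ?_ ?_ ?_ ?_ ?_ ?_ heq
    · exact fun t ht => (hy t (hsub ht)).continuousAt.continuousWithinAt
    · exact fun t ht => (hy t (hsub (Ico_subset_Icc_self ht))).hasDerivWithinAt
    · exact fun t ht => (hballmem t (Ico_subset_Icc_self ht)).1
    · exact fun t ht => (hz t (hsub ht)).continuousAt.continuousWithinAt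
    · exact fun t ht => (hz t (hsub (Ico_subset_Icc_self ht))).hasDerivWithinAt
    · exact fun t ht => (hballmem t (Ico_subset_Icc_self ht)).2
  -- sup argument
  set A := {s : ℝ | s ∈ Icc 0 b ∧ EqOn y z (Icc 0 s)} with hA
  have h0A : (0:ℝ) ∈ A := by
    refine ⟨⟨le_rfl, hb⟩, fun t ht => ?_⟩
    have : t = 0 := le_antisymm ht.2 ht.1
    rw [this]; exact h0
  have hbdd : BddAbove A := ⟨b, fun s hs => hs.1.2⟩
  set m := sSup A with hm
  have hmIcc : m ∈ Icc 0 b := ⟨le_csSup hbdd h0A, csSup_le ⟨0, h0A⟩ (fun s hs => hs.1.2)⟩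
  have hmEq : ∀ t ∈ Ico (0:ℝ) m, y t = z t := by
    intro t ht
    obtain ⟨s, hsA, hts⟩ := exists_lt_of_lt_csSup ⟨0, h0A⟩ ht.2
    exact hsA.2 ⟨ht.1, le_of_lt hts⟩
  have hym : y m = z m := by
    rcases eq_or_lt_of_le hmIcc.1 with h | h
    · rw [← h]; exact h0
    · have hyc : Tendsto y (𝓝[<] m) (𝓝 (y m)) :=
        (hy m hmIcc).continuousAt.continuousWithinAt
      have hzc : Tendsto z (𝓝[<] m) (𝓝 (z m)) :=
        (hz m hmIcc).continuousAt.continuousWithinAt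
      have hev : y =ᶠ[𝓝[<] m] z := by
        filter_upwards [eventually_nhdsWithin_of_eventually_nhds (eventually_gt_nhds h),
          self_mem_nhdsWithin] with t h1t h2t
        exact hmEq t ⟨le_of_lt h1t, h2t⟩
      exact tendsto_nhds_unique (hyc.congr' hev) hzc
  have hmA : m ∈ A := by
    refine ⟨hmIcc, fun t ht => ?_⟩
    rcases lt_or_eq_of_le ht.2 with h | h
    · exact hmEq t ⟨ht.1, h⟩
    · rw [h]; exact hym
  rcases eq_or_lt_of_le hmIcc.2 with h | h
  · rw [← h]; exact hmA.2
  · obtain ⟨s₁, h₁, h₂, h₃⟩ := spread m hmIcc hym h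
    have : s₁ ∈ A := by
      refine ⟨⟨le_trans hmIcc.1 (le_of_lt h₁), h₂⟩, fun t ht => ?_⟩
      by_cases hmt : t ≤ m
      · exact hmA.2 ⟨ht.1, hmt⟩
      · exact h₃ ⟨le_of_lt (lt_of_not_ge hmt), ht.2⟩
    exact absurd (le_csSup hbdd this) (not_le.mpr h₁)

lemma deriv_mem_cone {E : Type*} [NormedAddCommGroup E] [NormedSpace ℝ E]
    {K : Set E} (hKclosed : IsClosed K) (hKconv : Convex ℝ K)
    (hKscale : ∀ c : ℝ, 0 ≤ c → ∀ x ∈ K, c • x ∈ K) (h0K : (0:E) ∈ K)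
    {g k : ℝ → E} {a b : ℝ} (hab : a ≤ b)
    (hg : ∀ t ∈ Icc a b, HasDerivAt g (k t) t)
    (hk : ∀ t ∈ Icc a b, k t ∈ K) : g b - g a ∈ K := by
  by_contra hw
  obtain ⟨ℓ, u, hu1, hu2⟩ := geometric_hahn_banach_point_closed hKconv hKclosed hw
  have hu0 : u < 0 := by simpa using hu2 0 h0K
  have hpos : ∀ v ∈ K, 0 ≤ ℓ v := by
    intro v hv
    by_contra hneg
    push_neg at hneg
    have hc : 0 < u / ℓ v + 1 := by
      have := div_pos_iff.mpr (Or.inr ⟨hu0, hneg⟩)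
      linarith
    have h2 := hu2 _ (hKscale _ hc.le v hv)
    rw [map_smul, smul_eq_mul] at h2
    have h3 : (u / ℓ v + 1) * ℓ v = u + ℓ v := by
      rw [add_mul, one_mul, div_mul_cancel₀ _ (ne_of_lt hneg)]
    rw [h3] at h2
    linarith
  have hmono : MonotoneOn (fun t => ℓ (g t)) (Icc a b) := by
    apply monotoneOn_of_deriv_nonneg (convex_Icc a b)
    · exact fun t ht => (ℓ.continuous.continuousAt.comp (hg t ht).continuousAt).continuousWithinAt
    · intro t ht
      rw [interior_Icc] at ht
      exact (ℓ.hasFDerivAt.comp_hasDerivAt t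
        (hg t (Ioo_subset_Icc_self ht))).differentiableAt.differentiableWithinAt
    · intro t ht
      rw [interior_Icc] at ht
      have hd : HasDerivAt (fun t => ℓ (g t)) (ℓ (k t)) t :=
        ℓ.hasFDerivAt.comp_hasDerivAt t (hg t (Ioo_subset_Icc_self ht))
      rw [hd.deriv]
      exact hpos _ (hk t (Ioo_subset_Icc_self ht))
  have h1 : ℓ (g a) ≤ ℓ (g b) := hmono (left_mem_Icc.mpr hab) (right_mem_Icc.mpr hab) hab
  rw [map_sub] at hu1
  linarith

/-- For a uniformly eventually monotone system on an open forward-invariant set `C` with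
respect to a closed positive cone `K`, with an equilibrium `x* ∈ C` whose basin of
attraction `B(x*) ⊆ C`: every `x ∈ B(x*)` with `x ≻_K x*` satisfies `f(x) ∉ K \ {0}` and
`φ(t,x) − x ∉ K \ {0}` for all `t > 0`. -/
theorem stmt_9 {n : ℕ} (D : Set (Fin n → ℝ)) (hD : IsOpen D)
    (f : (Fin n → ℝ) → (Fin n → ℝ)) (hf : ContDiffOn ℝ 1 f D)
    (φ : ℝ → (Fin n → ℝ) → (Fin n → ℝ))
    (hφ0 : ∀ x ∈ D, φ 0 x = x)
    (hφ' : ∀ x ∈ D, ∀ t : ℝ, 0 ≤ t → HasDerivAt (fun τ => φ τ x) (f (φ t x)) t)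
    (C : Set (Fin n → ℝ)) (hCopen : IsOpen C) (hCD : C ⊆ D)
    (hCinv : ∀ t : ℝ, 0 ≤ t → ∀ x ∈ C, φ t x ∈ C)
    (K : Set (Fin n → ℝ)) (hKclosed : IsClosed K)
    (hKscale : ∀ c : ℝ, 0 ≤ c → ∀ x ∈ K, c • x ∈ K)
    (hKadd : ∀ x ∈ K, ∀ y ∈ K, x + y ∈ K)
    (hKpointed : ∀ x ∈ K, -x ∈ K → x = 0)
    (hφC1 : ∀ t : ℝ, 0 ≤ t → ContDiffOn ℝ 1 (φ t) C)
    (τ₀ : ℝ) (hτ₀ : 0 ≤ τ₀)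
    (hmon : ∀ x ∈ C, ∀ y ∈ C, x - y ∈ K → ∀ t : ℝ, τ₀ ≤ t → φ t x - φ t y ∈ K)
    (xs : Fin n → ℝ) (hxs : xs ∈ C) (heq : f xs = 0)
    (B : Set (Fin n → ℝ))
    (hB : B = {x ∈ C | Filter.Tendsto (fun t : ℝ => φ t x) Filter.atTop (nhds xs)})
    (hBC : B ⊆ C) :
    ∀ x ∈ B, x - xs ∈ K → x ≠ xs →
      f x ∉ K \ {0} ∧ ∀ t : ℝ, 0 < t → φ t x - x ∉ K \ {0} := by

  intro x hxB hxK hne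
  have hxC : x ∈ C := hBC hxB
  have hxlim : Tendsto (fun t : ℝ => φ t x) atTop (𝓝 xs) := by
    rw [hB] at hxB; exact hxB.2
  -- equilibrium stays fixed
  have heqb : ∀ t : ℝ, 0 ≤ t → φ t xs = xs := by
    intro t ht
    have h := ode_unique_aux hD hf (y := fun s => φ s xs) (z := fun _ => xs) ht
      (fun s hs => hφ' xs (hCD hxs) s hs.1)
      (fun s hs => hCD (hCinv s hs.1 xs hxs))
      (fun s _ => by simpa [heq] using hasDerivAt_const s xs)
      (fun s _ => hCD hxs)
      (hφ0 xs (hCD hxs))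
    exact h (right_mem_Icc.mpr ht)
  -- semigroup property
  have hsg : ∀ p ∈ C, ∀ t : ℝ, 0 ≤ t → ∀ s : ℝ, 0 ≤ s → φ s (φ t p) = φ (t + s) p := by
    intro p hp t ht s hs
    have hptC : φ t p ∈ C := hCinv t ht p hp
    have h := ode_unique_aux hD hf (y := fun τ => φ (t + τ) p) (z := fun τ => φ τ (φ t p)) hs
      (fun u hu => by
        have h1 := hφ' p (hCD hp) (t + u) (by linarith [hu.1])
        have h2 : HasDerivAt (fun τ : ℝ => t + τ) 1 u := (hasDerivAt_id u).const_add t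
        simpa [Function.comp_def] using h1.scomp u h2)
      (fun u hu => hCD (hCinv (t + u) (by linarith [hu.1]) p hp))
      (fun u hu => hφ' (φ t p) (hCD hptC) u hu.1)
      (fun u hu => hCD (hCinv u hu.1 _ hptC))
      (by show φ (t + 0) p = φ 0 (φ t p); rw [add_zero, hφ0 _ (hCD hptC)])
    exact (h (right_mem_Icc.mpr hs)).symm
  -- backward uniqueness
  have hback : ∀ p ∈ C, ∀ t : ℝ, 0 ≤ t → φ t p = xs → p = xs := by
    intro p hp t ht hpt
    have h := ode_unique_aux (f := fun v => -(f v)) hD hf.neg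
      (y := fun s => φ (t - s) p) (z := fun _ => xs) ht
      (fun s hs => by
        have h1 := hφ' p (hCD hp) (t - s) (by linarith [hs.2])
        have h2 : HasDerivAt (fun τ : ℝ => t - τ) (-1) s := (hasDerivAt_id s).const_sub t
        simpa [Function.comp_def] using h1.scomp s h2)
      (fun s hs => hCD (hCinv (t - s) (by linarith [hs.2]) p hp))
      (fun s _ => by simpa [heq] using hasDerivAt_const s xs)
      (fun s _ => hCD hxs)
      (by show φ (t - 0) p = xs; rw [sub_zero, hpt])
    have := h (right_mem_Icc.mpr ht)
    simpa [hφ0 p (hCD hp)] using this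
  -- basic cone facts
  have h0K : (0 : Fin n → ℝ) ∈ K := by simpa using hKscale 0 le_rfl _ hxK
  have hKconv : Convex ℝ K := fun u hu v hv a b ha hb _ =>
    hKadd _ (hKscale a ha _ hu) _ (hKscale b hb _ hv)
  have hlimK : ∀ (F : ℕ → (Fin n → ℝ)) (c w : Fin n → ℝ),
      Tendsto F atTop (𝓝 c) → (∀ k, F k - w ∈ K) → c - w ∈ K := by
    intro F c w hF hm
    exact hKclosed.mem_of_tendsto (hF.sub_const w) (Eventually.of_forall hm)
  -- key: xs ⪰ φ τ₀ x leads to contradiction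
  have hkey : xs - φ τ₀ x ∈ K → False := by
    intro hK1
    have hK2 : φ τ₀ x - xs ∈ K := by
      have := hmon x hxC xs hxs hxK τ₀ le_rfl
      rwa [heqb τ₀ hτ₀] at this
    have h3 : φ τ₀ x - xs = 0 := hKpointed _ hK2 (by simpa [neg_sub] using hK1)
    exact hne (hback x hxC τ₀ hτ₀ (by rwa [sub_eq_zero] at h3))
  constructor
  · -- f x ∉ K \ {0}
    intro hfK
    apply hkey
    -- chain rule identity
    have hchain : ∀ t : ℝ, 0 ≤ t → f (φ t x) = fderiv ℝ (φ t) x (f x) := by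
      intro t ht
      have hdiff : DifferentiableAt ℝ (φ t) x :=
        (((hφC1 t ht).contDiffAt (hCopen.mem_nhds hxC))).differentiableAt one_ne_zero
      have h00 : φ 0 x = x := hφ0 x (hCD hxC)
      have h1 : HasDerivAt (fun s => φ s x) (f x) 0 := by
        simpa [h00] using hφ' x (hCD hxC) 0 le_rfl
      have h2 : HasFDerivAt (φ t) (fderiv ℝ (φ t) x) (φ 0 x) := by
        rw [h00]; exact hdiff.hasFDerivAt
      have hF : HasDerivAt (fun s => φ t (φ s x)) (fderiv ℝ (φ t) x (f x)) 0 :=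
        h2.comp_hasDerivAt 0 h1
      have hG : HasDerivAt (fun s => φ (t + s) x) (f (φ t x)) 0 := by
        have h3 := hφ' x (hCD hxC) (t + 0) (by linarith)
        have h4 : HasDerivAt (fun τ : ℝ => t + τ) 1 0 := (hasDerivAt_id 0).const_add t
        simpa [Function.comp_def] using h3.scomp 0 h4
      have hu : UniqueDiffWithinAt ℝ (Ici (0:ℝ)) 0 := uniqueDiffOn_Ici 0 0 self_mem_Ici
      have hGw' : HasDerivWithinAt (fun s => φ (t + s) x)
          (fderiv ℝ (φ t) x (f x)) (Ici 0) 0 := by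
        refine (hF.hasDerivWithinAt.congr (fun s hs => ?_) ?_)
        · show φ (t + s) x = φ t (φ s x)
          rw [add_comm t s]; exact (hsg x hxC s hs t ht).symm
        · show φ (t + 0) x = φ t (φ 0 x)
          rw [add_comm t 0]; exact (hsg x hxC 0 le_rfl t ht).symm
      rw [← hG.hasDerivWithinAt.derivWithin hu, ← hGw'.derivWithin hu]
    -- cone preservation of the differential
    have hcone : ∀ t : ℝ, τ₀ ≤ t → fderiv ℝ (φ t) x (f x) ∈ K := by
      intro t ht
      have ht0 : 0 ≤ t := le_trans hτ₀ ht
      have hdiff : DifferentiableAt ℝ (φ t) x :=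
        (((hφC1 t ht0).contDiffAt (hCopen.mem_nhds hxC))).differentiableAt one_ne_zero
      set v := f x with hv
      have hline : HasDerivAt (fun h : ℝ => x + h • v) v 0 := by
        simpa using ((hasDerivAt_id (0:ℝ)).smul_const v).const_add x
      have h2 : HasFDerivAt (φ t) (fderiv ℝ (φ t) x) (x + (0:ℝ) • v) := by
        simpa using hdiff.hasFDerivAt
      have hψ : HasDerivAt (fun h : ℝ => φ t (x + h • v)) (fderiv ℝ (φ t) x v) 0 :=
        h2.comp_hasDerivAt 0 hline
      have hslope := hasDerivAt_iff_tendsto_slope.mp hψ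
      have hslope' : Tendsto (slope (fun h : ℝ => φ t (x + h • v)) 0) (𝓝[>] 0)
          (𝓝 (fderiv ℝ (φ t) x v)) :=
        hslope.mono_left (nhdsWithin_mono 0 (fun h hh => ne_of_gt hh))
      apply hKclosed.mem_of_tendsto hslope'
      have hCmem : ∀ᶠ h : ℝ in 𝓝 0, x + h • v ∈ C := by
        have hcont : ContinuousAt (fun h : ℝ => x + h • v) 0 :=
          (continuous_const.add (continuous_id.smul continuous_const)).continuousAt
        have := hcont.eventually_mem (by simpa using hCopen.mem_nhds hxC)
        simpa using this
      filter_upwards [eventually_nhdsWithin_of_eventually_nhds hCmem,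
        self_mem_nhdsWithin] with h h1 h2'
      have hh : (0:ℝ) < h := h2'
      have hKdiff : φ t (x + h • v) - φ t x ∈ K := by
        refine hmon _ h1 x hxC ?_ t ht
        simpa [add_sub_cancel_left] using hKscale h hh.le v hfK.1
      have h3 := hKscale h⁻¹ (inv_nonneg.mpr hh.le) _ hKdiff
      have h4 : slope (fun h : ℝ => φ t (x + h • v)) 0 h
          = h⁻¹ • (φ t (x + h • v) - φ t x) := by
        simp [slope, sub_zero]
      rw [h4]; exact h3
    -- derivative of the trajectory lies in K after τ₀
    have hDt : ∀ t : ℝ, τ₀ ≤ t → f (φ t x) ∈ K := fun t ht =>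
      (hchain t (le_trans hτ₀ ht)) ▸ hcone t ht
    have hincN : ∀ N : ℕ, φ (τ₀ + N) x - φ τ₀ x ∈ K := by
      intro N
      exact deriv_mem_cone hKclosed hKconv hKscale h0K
        (le_add_of_nonneg_right N.cast_nonneg)
        (fun t ht => hφ' x (hCD hxC) t (le_trans hτ₀ ht.1))
        (fun t ht => hDt t ht.1)
    have hT : Tendsto (fun N : ℕ => φ (τ₀ + N) x) atTop (𝓝 xs) :=
      hxlim.comp (tendsto_atTop_add_const_left atTop τ₀ tendsto_natCast_atTop_atTop)
    exact hlimK _ _ _ hT hincN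
  · -- φ t x - x ∉ K \ {0}
    intro t₀ ht₀ hmem
    apply hkey
    have hstep : ∀ k : ℕ, φ (τ₀ + (k + 1) * t₀) x - φ (τ₀ + k * t₀) x ∈ K := by
      intro k
      have hk0 : (0:ℝ) ≤ τ₀ + k * t₀ := by positivity
      have h1 := hmon (φ t₀ x) (hCinv t₀ ht₀.le x hxC) x hxC hmem.1 (τ₀ + k * t₀)
        (le_add_of_nonneg_right (by positivity))
      rw [hsg x hxC t₀ ht₀.le (τ₀ + k * t₀) hk0] at h1
      have harg : t₀ + (τ₀ + k * t₀) = τ₀ + ((k : ℝ) + 1) * t₀ := by ring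
      rwa [harg] at h1
    have htele : ∀ k : ℕ, φ (τ₀ + k * t₀) x - φ τ₀ x ∈ K := by
      intro k
      induction k with
      | zero => simpa using h0K
      | succ k ih =>
        have h2 := hKadd _ (hstep k) _ ih
        rw [sub_add_sub_cancel] at h2
        have : ((k : ℝ) + 1) = ((k + 1 : ℕ) : ℝ) := by push_cast; ring
        rwa [this] at h2
    have hT : Tendsto (fun k : ℕ => φ (τ₀ + k * t₀) x) atTop (𝓝 xs) := by
      apply hxlim.comp
      exact tendsto_atTop_add_const_left atTop τ₀
        (tendsto_natCast_atTop_atTop.atTop_mul_const ht₀)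
    exact hlimK _ _ _ hT htele
end

section
/- Let K be a closed positive cone and let x* ∈ D be an equilibrium of ẋ = f(x) (f(x*) = 0) that is Lyapunov stable (for every ε > 0 there exists δ > 0 such that ‖x − x*‖ < δ implies ‖φ(t,x) − x*‖ < ε for all t ≥ 0) and attractive on its basin B(x*) = { x ∈ D : φ(t,x) → x* as t → ∞ }, which is an open set. Suppose the flow is defined for all t ≥ 0 on D and the system is uniformly eventually monotone on B(x*) with respect to K. Then for all z, w ∈ B(x*) with z ⪯_K w and [z,w]_K ⊆ D, the order-interval [z,w]_K = { y ∈ ℝⁿ : z ⪯_K y ⪯_K w } is contained in B(x*). -/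
open Set Metric Real Filter

/-- A closed pointed cone in `ℝⁿ` is normal: `‖a‖ ≤ γ‖a+b‖` for `a, b ∈ K`. -/
lemma cone_normal {n : ℕ} {K : Set (Fin n → ℝ)} (hKclosed : IsClosed K)
    (hKscale : ∀ c : ℝ, 0 ≤ c → ∀ x ∈ K, c • x ∈ K)
    (hKpointed : ∀ x ∈ K, -x ∈ K → x = 0) :
    ∃ γ : ℝ, 0 ≤ γ ∧ ∀ a ∈ K, ∀ b ∈ K, ‖a‖ ≤ γ * ‖a + b‖ := by
  by_contra h
  push_neg at h
  choose a ha b hb hab using fun m : ℕ => h ((m : ℝ) + 1) (by positivity)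
  have hane : ∀ m, ‖a m‖ ≠ 0 := by
    intro m hm
    have := hab m
    rw [hm] at this
    nlinarith [norm_nonneg (a m + b m), this]
  set u : ℕ → (Fin n → ℝ) := fun m => ‖a m‖⁻¹ • a m with hu
  set v : ℕ → (Fin n → ℝ) := fun m => ‖a m‖⁻¹ • b m with hv
  have hunorm : ∀ m, ‖u m‖ = 1 := by
    intro m
    rw [hu]
    simp only [norm_smul, norm_inv, norm_norm]
    exact inv_mul_cancel₀ (hane m)
  have huvK : ∀ m, u m ∈ K ∧ v m ∈ K := fun m =>
    ⟨hKscale _ (inv_nonneg.2 (norm_nonneg _)) _ (ha m),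
     hKscale _ (inv_nonneg.2 (norm_nonneg _)) _ (hb m)⟩
  have hsum : ∀ m, ‖u m + v m‖ ≤ 1 / ((m : ℝ) + 1) := by
    intro m
    have h1 : u m + v m = ‖a m‖⁻¹ • (a m + b m) := by rw [hu, hv, smul_add]
    rw [h1, norm_smul, norm_inv, norm_norm]
    have hpos : 0 < ‖a m‖ := lt_of_le_of_ne (norm_nonneg _) (Ne.symm (hane m))
    rw [inv_mul_le_iff₀ hpos, mul_one_div, le_div_iff₀ (by positivity)]
    nlinarith [hab m]
  have hvball : ∀ m, ‖v m‖ ≤ 2 := by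
    intro m
    have := norm_le_norm_add_norm_sub' (u m) (v m)
    have h2 : ‖v m‖ ≤ ‖u m + v m‖ + ‖u m‖ := by
      calc ‖v m‖ = ‖(u m + v m) - u m‖ := by congr 1; abel
      _ ≤ ‖u m + v m‖ + ‖u m‖ := norm_sub_le _ _
    have h3 : (1 : ℝ) / ((m : ℝ) + 1) ≤ 1 := by
      rw [div_le_one (by positivity)]; simp [Nat.cast_nonneg]
    rw [hunorm m] at h2
    linarith [hsum m]
  have hcomp : IsCompact ((closedBall (0 : Fin n → ℝ) 1) ×ˢ (closedBall (0 : Fin n → ℝ) 2)) :=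
    (isCompact_closedBall _ _).prod (isCompact_closedBall _ _)
  have hmem : ∀ m, (u m, v m) ∈ (closedBall (0 : Fin n → ℝ) 1) ×ˢ (closedBall (0 : Fin n → ℝ) 2) := by
    intro m
    constructor
    · simp [mem_closedBall, dist_zero_right, hunorm m]
    · simp only [mem_closedBall, dist_zero_right]; exact hvball m
  obtain ⟨⟨u0, v0⟩, _, σ, hσ, hlim⟩ := hcomp.tendsto_subseq hmem
  have hulim : Tendsto (fun k => u (σ k)) atTop (nhds u0) :=
    (continuous_fst.tendsto _).comp hlim
  have hvlim : Tendsto (fun k => v (σ k)) atTop (nhds v0) :=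
    (continuous_snd.tendsto _).comp hlim
  have hu0K : u0 ∈ K := hKclosed.mem_of_tendsto hulim (Filter.Eventually.of_forall fun k => (huvK _).1)
  have hv0K : v0 ∈ K := hKclosed.mem_of_tendsto hvlim (Filter.Eventually.of_forall fun k => (huvK _).2)
  have hu0norm : ‖u0‖ = 1 := by
    have := (hulim.norm)
    have h2 : Tendsto (fun k => ‖u (σ k)‖) atTop (nhds 1) := by
      simp only [hunorm]; exact tendsto_const_nhds
    exact tendsto_nhds_unique this h2
  have hsum0 : u0 + v0 = 0 := by
    have h1 : Tendsto (fun k => ‖u (σ k) + v (σ k)‖) atTop (nhds ‖u0 + v0‖) :=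
      (hulim.add hvlim).norm
    have h2 : Tendsto (fun k => ‖u (σ k) + v (σ k)‖) atTop (nhds 0) := by
      refine squeeze_zero (fun k => norm_nonneg _)
        (fun k => (hsum (σ k)).trans ?_) tendsto_one_div_add_atTop_nhds_zero_nat
      gcongr
      exact_mod_cast hσ.le_apply
    have := tendsto_nhds_unique h1 h2
    exact norm_eq_zero.mp this
  have : u0 = 0 := hKpointed u0 hu0K (by rw [show -u0 = v0 from by linear_combination (norm := module) -hsum0]; exact hv0K)
  rw [this] at hu0norm
  simp at hu0norm

/-- Continuous dependence on initial conditions for the flow, via Grönwall. -/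
lemma flow_cont {n : ℕ} {D : Set (Fin n → ℝ)} (hD : IsOpen D)
    {f : (Fin n → ℝ) → (Fin n → ℝ)} (hf : ContDiffOn ℝ 1 f D)
    {φ : ℝ → (Fin n → ℝ) → (Fin n → ℝ)}
    (hφ0 : ∀ x ∈ D, φ 0 x = x)
    (hφD : ∀ t : ℝ, 0 ≤ t → ∀ x ∈ D, φ t x ∈ D)
    (hφ' : ∀ x ∈ D, ∀ t : ℝ, 0 ≤ t → HasDerivAt (fun τ => φ τ x) (f (φ t x)) t)
    {y : Fin n → ℝ} (hy : y ∈ D) (T : ℝ) (hT : 0 ≤ T) {e : ℝ} (he : 0 < e) :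
    ∃ d : ℝ, 0 < d ∧ ∀ x ∈ D, dist x y < d → dist (φ T x) (φ T y) < e := by
  classical
  -- continuity of trajectories
  have hcont : ∀ x ∈ D, ContinuousOn (fun s => φ s x) (Icc 0 T) := fun x hx s hs =>
    ((hφ' x hx s hs.1).continuousAt).continuousWithinAt
  -- the compact trajectory of y
  set Γ : Set (Fin n → ℝ) := (fun s => φ s y) '' Icc 0 T with hΓdef
  have hΓcomp : IsCompact Γ := isCompact_Icc.image_of_continuousOn (hcont y hy)
  have hΓD : Γ ⊆ D := by rintro _ ⟨s, hs, rfl⟩; exact hφD s hs.1 y hy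
  obtain ⟨ε, hε, hεsub⟩ := hΓcomp.exists_cthickening_subset_open hD hΓD
  set C : Set (Fin n → ℝ) := cthickening ε Γ with hCdef
  have hCcomp : IsCompact C := hΓcomp.cthickening
  have hCD : C ⊆ D := hεsub
  -- Lipschitz bound from the derivative
  have hfc : ContinuousOn (fderiv ℝ f) D := hf.continuousOn_fderiv_of_isOpen hD le_rfl
  obtain ⟨M, hM⟩ := hCcomp.exists_bound_of_continuousOn (hfc.mono hCD)
  set M0 : ℝ := max M 0 with hM0def
  have hM0 : 0 ≤ M0 := le_max_right _ _
  have hMbound : ∀ p ∈ C, ‖fderiv ℝ f p‖ ≤ M0 := fun p hp => (hM p hp).trans (le_max_left _ _)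
  set L : NNReal := M0.toNNReal with hLdef
  have hLcoe : (L : ℝ) = M0 := Real.coe_toNNReal _ hM0
  -- time-dependent set for Grönwall
  set sF : ℝ → Set (Fin n → ℝ) := fun t => closedBall (φ (min (max t 0) T) y) ε with hsFdef
  have hproj : ∀ t : ℝ, min (max t 0) T ∈ Icc (0:ℝ) T := fun t =>
    ⟨le_min (le_max_right t 0) hT, min_le_right _ _⟩
  have hsub : ∀ t : ℝ, sF t ⊆ C := by
    intro t
    have hmem : φ (min (max t 0) T) y ∈ Γ := ⟨_, hproj t, rfl⟩
    simpa only [hsFdef, hCdef] using closedBall_subset_cthickening hmem ε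
  have hLip : ∀ t : ℝ, LipschitzOnWith L f (sF t) := by
    intro t
    apply Convex.lipschitzOnWith_of_nnnorm_hasFDerivWithin_le
      (f' := fun p => fderiv ℝ f p)
    · intro p hp
      have hpD : p ∈ D := hCD (hsub t hp)
      exact ((hf.differentiableOn one_ne_zero).differentiableAt
        (hD.mem_nhds hpD)).hasFDerivAt.hasFDerivWithinAt
    · intro p hp
      rw [← NNReal.coe_le_coe, coe_nnnorm, hLcoe]
      exact hMbound p (hsub t hp)
    · exact convex_closedBall _ _
  -- choice of d
  set d : ℝ := (min ε e / 2) * exp (-(M0 * T)) with hddef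
  have hd : 0 < d := by
    apply mul_pos
    · have := lt_min hε he; linarith
    · exact exp_pos _
  refine ⟨d, hd, ?_⟩
  intro x hx hdxy
  -- Gronwall estimate, given confinement up to time s
  have gron : ∀ s ∈ Icc (0:ℝ) T, (∀ u ∈ Icc (0:ℝ) s, dist (φ u x) (φ u y) ≤ ε) →
      ∀ u ∈ Icc (0:ℝ) s, dist (φ u x) (φ u y) ≤ min ε e / 2 := by
    intro s hs hconf
    have key := dist_le_of_trajectories_ODE_of_mem (v := fun _ => f) (s := sF) (K := L)
      (f := fun u => φ u x) (g := fun u => φ u y) (a := 0) (b := s) (δ := d)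
      (fun t _ => hLip t)
      ((hcont x hx).mono (Icc_subset_Icc_right hs.2))
      (fun u hu => (hφ' x hx u hu.1).hasDerivWithinAt)
      (fun u hu => by
        have hu' : min (max u 0) T = u := by
          rw [max_eq_left hu.1, min_eq_left (hu.2.le.trans hs.2)]
        · simp only [hsFdef]
          rw [hu']
          exact hconf u ⟨hu.1, hu.2.le⟩)
      ((hcont y hy).mono (Icc_subset_Icc_right hs.2))
      (fun u hu => (hφ' y hy u hu.1).hasDerivWithinAt)
      (fun u hu => by
        have hu' : min (max u 0) T = u := by
          rw [max_eq_left hu.1, min_eq_left (hu.2.le.trans hs.2)]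
        · simp only [hsFdef]
          rw [hu']
          exact mem_closedBall_self hε.le)
      (by rw [hφ0 x hx, hφ0 y hy]; exact hdxy.le)
    intro u hu
    have h1 := key u hu
    have h2 : d * exp ((L : ℝ) * (u - 0)) ≤ min ε e / 2 := by
      rw [hddef, hLcoe, sub_zero, mul_assoc, ← exp_add]
      have h3 : exp (-(M0 * T) + M0 * u) ≤ 1 := by
        rw [exp_le_one_iff]
        nlinarith [hu.2.trans hs.2, hu.1, hM0]
      nlinarith [exp_pos (-(M0 * T) + M0 * u), lt_min hε he, h3]
    exact h1.trans h2
  -- bootstrap: the set of times where confinement holds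
  set A : Set ℝ := {s ∈ Icc (0:ℝ) T | ∀ u ∈ Icc (0:ℝ) s, dist (φ u x) (φ u y) ≤ ε} with hAdef
  have h0A : (0:ℝ) ∈ A := by
    refine ⟨⟨le_refl _, hT⟩, ?_⟩
    intro u hu
    have : u = 0 := le_antisymm hu.2 hu.1
    rw [this, hφ0 x hx, hφ0 y hy]
    have : d ≤ ε := by
      have h1 : min ε e / 2 ≤ ε := by
        have := min_le_left ε e; linarith
      have h2 : exp (-(M0 * T)) ≤ 1 := by
        rw [exp_le_one_iff]; nlinarith
      rw [hddef]
      nlinarith [exp_pos (-(M0 * T)), lt_min hε he]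
    linarith [hdxy]
  have hAbdd : BddAbove A := ⟨T, fun s hs => hs.1.2⟩
  set t' : ℝ := sSup A with ht'def
  have ht'mem : t' ∈ Icc (0:ℝ) T :=
    ⟨le_csSup hAbdd h0A, csSup_le ⟨0, h0A⟩ fun s hs => hs.1.2⟩
  have ht'A : t' ∈ A := by
    refine ⟨ht'mem, ?_⟩
    intro u hu
    rcases lt_or_eq_of_le hu.2 with hlt | heq
    · obtain ⟨s, hsA, hus⟩ := exists_lt_of_lt_csSup ⟨0, h0A⟩ hlt
      exact hsA.2 u ⟨hu.1, hus.le⟩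
    · -- u = t'; use continuity from the left
      rw [heq]
      rcases eq_or_lt_of_le ht'mem.1 with h0 | h0
      · rw [← h0, hφ0 x hx, hφ0 y hy]
        have h1 : min ε e / 2 ≤ ε := by have := min_le_left ε e; linarith
        have h2 : exp (-(M0 * T)) ≤ 1 := by rw [exp_le_one_iff]; nlinarith
        have : d ≤ ε := by rw [hddef]; nlinarith [lt_min hε he]
        linarith [hdxy]
      · -- t' > 0 : take limit from Ico 0 t'
        have hcl : t' ∈ closure (Ico (0:ℝ) t') := by
          rw [closure_Ico (ne_of_lt h0)]
          exact ⟨ht'mem.1, le_refl _⟩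
        have hne : (nhdsWithin t' (Ico (0:ℝ) t')).NeBot :=
          mem_closure_iff_nhdsWithin_neBot.mp hcl
        have hco : Filter.Tendsto (fun s => dist (φ s x) (φ s y))
            (nhdsWithin t' (Ico (0:ℝ) t')) (nhds (dist (φ t' x) (φ t' y))) :=
          Filter.Tendsto.dist
            ((hcont x hx t' ht'mem).mono (fun p hp => ⟨hp.1, hp.2.le.trans ht'mem.2⟩))
            ((hcont y hy t' ht'mem).mono (fun p hp => ⟨hp.1, hp.2.le.trans ht'mem.2⟩))
        refine le_of_tendsto hco ?_
        filter_upwards [self_mem_nhdsWithin] with s hs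
        obtain ⟨σ, hσA, hsσ⟩ := exists_lt_of_lt_csSup ⟨0, h0A⟩ (hs.2 : s < t')
        exact hσA.2 s ⟨hs.1, hsσ.le⟩
  -- t' = T
  have ht'T : t' = T := by
    by_contra hne
    have hlt : t' < T := lt_of_le_of_ne ht'mem.2 hne
    have hsmall := gron t' ht'mem ht'A.2
    have ht'half : dist (φ t' x) (φ t' y) ≤ min ε e / 2 :=
      hsmall t' ⟨ht'mem.1, le_refl _⟩
    have hdistlt : dist (φ t' x) (φ t' y) < ε := by
      have := min_le_left ε e; linarith
    have hco : Filter.Tendsto (fun s => dist (φ s x) (φ s y))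
        (nhdsWithin t' (Icc (0:ℝ) T)) (nhds (dist (φ t' x) (φ t' y))) :=
      Filter.Tendsto.dist (hcont x hx t' ht'mem) (hcont y hy t' ht'mem)
    have hev : ∀ᶠ s in nhdsWithin t' (Icc (0:ℝ) T), dist (φ s x) (φ s y) < ε :=
      hco.eventually_lt_const hdistlt
    obtain ⟨δ', hδ'pos, hδ'⟩ := Metric.mem_nhdsWithin_iff.mp hev
    set s' : ℝ := min (t' + δ'/2) T with hs'def
    have hs'gt : t' < s' := lt_min (by linarith) hlt
    have hs'mem : s' ∈ Icc (0:ℝ) T := ⟨ht'mem.1.trans hs'gt.le, min_le_right _ _⟩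
    have hs'A : s' ∈ A := by
      refine ⟨hs'mem, ?_⟩
      intro u hu
      rcases le_or_gt u t' with h | h
      · exact ht'A.2 u ⟨hu.1, h⟩
      · apply le_of_lt
        have hub : u ≤ t' + δ'/2 := hu.2.trans (min_le_left _ _)
        exact hδ' ⟨by rw [mem_ball, Real.dist_eq, abs_lt]; constructor <;> linarith,
          ⟨hu.1, hu.2.trans hs'mem.2⟩⟩
    have := le_csSup hAbdd hs'A
    linarith
  -- conclude
  have hTA : T ∈ A := ht'T ▸ ht'A
  have hfinal := gron T ⟨hT, le_refl _⟩ hTA.2 T ⟨hT, le_refl _⟩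
  have : min ε e / 2 < e := by have := min_le_right ε e; linarith
  linarith



/-- For a uniformly eventually monotone system on the (open) basin of attraction `B(x*)` of a
Lyapunov-stable, attractive equilibrium `x*`, order-intervals between points of the basin
(contained in the domain) are contained in the basin. -/
theorem stmt_10 {n : ℕ} (D : Set (Fin n → ℝ)) (hD : IsOpen D)
    (f : (Fin n → ℝ) → (Fin n → ℝ)) (hf : ContDiffOn ℝ 1 f D)
    (φ : ℝ → (Fin n → ℝ) → (Fin n → ℝ))
    (hφ0 : ∀ x ∈ D, φ 0 x = x)
    (hφD : ∀ t : ℝ, 0 ≤ t → ∀ x ∈ D, φ t x ∈ D)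
    (hφ' : ∀ x ∈ D, ∀ t : ℝ, 0 ≤ t → HasDerivAt (fun τ => φ τ x) (f (φ t x)) t)
    (K : Set (Fin n → ℝ)) (hKclosed : IsClosed K)
    (hKscale : ∀ c : ℝ, 0 ≤ c → ∀ x ∈ K, c • x ∈ K)
    (hKadd : ∀ x ∈ K, ∀ y ∈ K, x + y ∈ K)
    (hKpointed : ∀ x ∈ K, -x ∈ K → x = 0)
    (xs : Fin n → ℝ) (hxs : xs ∈ D) (heq : f xs = 0)
    (hstable : ∀ ε : ℝ, 0 < ε → ∃ δ : ℝ, 0 < δ ∧ ∀ x ∈ D, ‖x - xs‖ < δ →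
      ∀ t : ℝ, 0 ≤ t → ‖φ t x - xs‖ < ε)
    (B : Set (Fin n → ℝ))
    (hB : B = {x ∈ D | Filter.Tendsto (fun t : ℝ => φ t x) Filter.atTop (nhds xs)})
    (hBopen : IsOpen B)
    (τ₀ : ℝ) (hτ₀ : 0 ≤ τ₀)
    (hmon : ∀ x ∈ B, ∀ y ∈ B, x - y ∈ K → ∀ t : ℝ, τ₀ ≤ t → φ t x - φ t y ∈ K) :
    ∀ z ∈ B, ∀ w ∈ B, w - z ∈ K →
      {y : Fin n → ℝ | y - z ∈ K ∧ w - y ∈ K} ⊆ D →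
      {y : Fin n → ℝ | y - z ∈ K ∧ w - y ∈ K} ⊆ B := by
  intro z hz w hw hwz hsubD
  set I : Set (Fin n → ℝ) := {y : Fin n → ℝ | y - z ∈ K ∧ w - y ∈ K} with hIdef
  have hBmem : ∀ p, p ∈ B ↔ (p ∈ D ∧
      Filter.Tendsto (fun t : ℝ => φ t p) atTop (nhds xs)) := fun p => by
    rw [hB]; exact Iff.rfl
  have h0K : (0 : Fin n → ℝ) ∈ K := by simpa using hKscale 0 le_rfl _ hwz
  have hzI : z ∈ I := ⟨by simpa [sub_self] using h0K, hwz⟩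
  obtain ⟨γ, hγ0, hγ⟩ := cone_normal hKclosed hKscale hKpointed
  -- convexity of the order interval
  have hIconv : Convex ℝ I := by
    intro p hp q hq α β hα hβ hαβ
    constructor
    · have h1 : α • p + β • q - z = α • (p - z) + β • (q - z) := by
        have hzz : z = α • z + β • z := by rw [← add_smul, hαβ, one_smul]
        calc α • p + β • q - z = α • p + β • q - (α • z + β • z) := by rw [← hzz]
          _ = α • (p - z) + β • (q - z) := by simp only [smul_sub]; abel
      show α • p + β • q - z ∈ K
      rw [h1]
      exact hKadd _ (hKscale α hα _ hp.1) _ (hKscale β hβ _ hq.1)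
    · have h1 : w - (α • p + β • q) = α • (w - p) + β • (w - q) := by
        have hww : w = α • w + β • w := by rw [← add_smul, hαβ, one_smul]
        calc w - (α • p + β • q) = (α • w + β • w) - (α • p + β • q) := by rw [← hww]
          _ = α • (w - p) + β • (w - q) := by simp only [smul_sub]; abel
      show w - (α • p + β • q) ∈ K
      rw [h1]
      exact hKadd _ (hKscale α hα _ hp.2) _ (hKscale β hβ _ hq.2)
  -- key closedness claim
  have hclosed : ∀ p ∈ I, p ∈ closure (I ∩ B) → p ∈ B := by
    intro p hpI hpcl
    have hpD : p ∈ D := hsubD hpI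
    rw [hBmem]
    refine ⟨hpD, ?_⟩
    rw [Metric.tendsto_atTop]
    intro ε' hε'
    set δ₂ : ℝ := ε' / (2 * γ + 2) with hδ₂def
    have hδ₂ : 0 < δ₂ := div_pos hε' (by linarith)
    obtain ⟨T₁, hT₁⟩ := Metric.tendsto_atTop.mp ((hBmem z).mp hz).2 δ₂ hδ₂
    obtain ⟨T₂, hT₂⟩ := Metric.tendsto_atTop.mp ((hBmem w).mp hw).2 δ₂ hδ₂
    refine ⟨max τ₀ (max T₁ T₂), ?_⟩
    intro t ht
    have htτ : τ₀ ≤ t := le_trans (le_max_left _ _) ht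
    have ht0 : 0 ≤ t := le_trans hτ₀ htτ
    have hkey : ∀ e : ℝ, 0 < e → dist (φ t p) xs ≤ (2 * γ + 1) * δ₂ + e := by
      intro e he
      obtain ⟨d, hd, hcd⟩ := flow_cont hD hf hφ0 hφD hφ' hpD t ht0 he
      obtain ⟨q, hqmem, hqd⟩ := Metric.mem_closure_iff.mp hpcl d hd
      have hqD : q ∈ D := hsubD hqmem.1
      have h1 : dist (φ t q) (φ t p) < e := hcd q hqD (by rwa [dist_comm])
      have ha : φ t q - φ t z ∈ K := hmon q hqmem.2 z hz hqmem.1.1 t htτ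
      have hb : φ t w - φ t q ∈ K := hmon w hw q hqmem.2 hqmem.1.2 t htτ
      have hzb : dist (φ t z) xs < δ₂ :=
        hT₁ t (le_trans (le_trans (le_max_left _ _) (le_max_right _ _)) ht)
      have hwb : dist (φ t w) xs < δ₂ :=
        hT₂ t (le_trans (le_trans (le_max_right _ _) (le_max_right _ _)) ht)
      have hsum : ‖(φ t q - φ t z) + (φ t w - φ t q)‖ < 2 * δ₂ := by
        have heq2 : (φ t q - φ t z) + (φ t w - φ t q) = (φ t w - xs) + (xs - φ t z) := by abel
        rw [heq2]
        have h3 : ‖(φ t w - xs) + (xs - φ t z)‖ ≤ ‖φ t w - xs‖ + ‖xs - φ t z‖ :=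
          norm_add_le _ _
        have h4 : ‖φ t w - xs‖ = dist (φ t w) xs := (dist_eq_norm _ _).symm
        have h5 : ‖xs - φ t z‖ = dist (φ t z) xs := by
          rw [norm_sub_rev]; exact (dist_eq_norm _ _).symm
        rw [h4, h5] at h3
        linarith
      have hna : ‖φ t q - φ t z‖ ≤ γ * (2 * δ₂) := by
        have := hγ _ ha _ hb
        nlinarith
      have h2 : dist (φ t q) xs ≤ 2 * γ * δ₂ + δ₂ := by
        have h6 := dist_triangle (φ t q) (φ t z) xs
        have h7 : dist (φ t q) (φ t z) = ‖φ t q - φ t z‖ := dist_eq_norm _ _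
        nlinarith
      have h8 := dist_triangle (φ t p) (φ t q) xs
      have h9 : dist (φ t p) (φ t q) = dist (φ t q) (φ t p) := dist_comm _ _
      nlinarith
    have hle : dist (φ t p) xs ≤ (2 * γ + 1) * δ₂ :=
      le_of_forall_pos_le_add hkey
    have hlt : (2 * γ + 1) * δ₂ < ε' := by
      rw [hδ₂def]
      have h10 : (2 * γ + 2) * (ε' / (2 * γ + 2)) = ε' := by
        field_simp
      nlinarith [div_pos hε' (show (0:ℝ) < 2 * γ + 2 by linarith)]
    linarith
  -- connectedness argument
  intro y hy
  by_contra hyB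
  have hvopen : IsOpen (closure (I ∩ B))ᶜ := isClosed_closure.isOpen_compl
  have hcover : I ⊆ B ∪ (closure (I ∩ B))ᶜ := by
    intro p hp
    by_cases h : p ∈ closure (I ∩ B)
    · exact Or.inl (hclosed p hp h)
    · exact Or.inr h
  have h1 : (I ∩ B).Nonempty := ⟨z, hzI, hz⟩
  have h2 : (I ∩ (closure (I ∩ B))ᶜ).Nonempty := ⟨y, hy, fun hc => hyB (hclosed y hy hc)⟩
  obtain ⟨p, hpI, hpB, hpc⟩ := hIconv.isPreconnected B _ hBopen hvopen hcover h1 h2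
  exact hpc (subset_closure ⟨hpI, hpB⟩)
end

section
/- Let B ⊆ ℝⁿ be open, x* ∈ B, and let φ : ℝ≥0 × B → B be the flow of ẋ = f(x) on B. Let J ∈ ℝ^{n×n} be Hurwitz (every complex eigenvalue has negative real part). Suppose h : B → V ⊆ ℝⁿ is a C¹ diffeomorphism onto an open set V containing 0, with h(x*) = 0, Dh(x*) = I (identity matrix), and h(φ(t,x)) = e^{Jt} h(x) for all t ≥ 0 and x ∈ B. Then for every x ∈ B, the function t ↦ φ(t,x) − x* − e^{Jt} h(x) is o(‖e^{Jt} h(x)‖) as t → ∞ (i.e., for every ε > 0 there exists T such that ‖φ(t,x) − x* − e^{Jt}h(x)‖ ≤ ε‖e^{Jt}h(x)‖ for all t ≥ T). -/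
open NormedSpace Filter Matrix Polynomial

namespace Stmt11Aux

noncomputable def mulVecCLM {n : ℕ} (v : Fin n → ℂ) :
    Matrix (Fin n) (Fin n) ℂ →L[ℂ] (Fin n → ℂ) :=
  { toFun := fun M => M.mulVec v
    map_add' := fun M N => Matrix.add_mulVec M N v
    map_smul' := fun c M => Matrix.smul_mulVec c M v
    cont := Continuous.matrix_mulVec continuous_id continuous_const }

lemma exp_mulVec_eq {n : ℕ} (M : Matrix (Fin n) (Fin n) ℂ) (v : Fin n → ℂ) :
    (exp M).mulVec v = ∑' k : ℕ, ((k.factorial : ℂ))⁻¹ • (M ^ k *ᵥ v) := by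
  letI : SeminormedRing (Matrix (Fin n) (Fin n) ℂ) := Matrix.linftyOpSemiNormedRing
  letI : NormedRing (Matrix (Fin n) (Fin n) ℂ) := Matrix.linftyOpNormedRing
  letI : NormedAlgebra ℂ (Matrix (Fin n) (Fin n) ℂ) := Matrix.linftyOpNormedAlgebra
  have hs : Summable (fun k : ℕ => ((k.factorial : ℂ))⁻¹ • M ^ k) :=
    NormedSpace.expSeries_summable' (𝕂 := ℂ) M
  have h2 := (mulVecCLM v).map_tsum hs
  rw [exp_eq_tsum ℂ]
  simpa [mulVecCLM] using h2

lemma exp_smul_mulVec_of_nilp {n k : ℕ} (N : Matrix (Fin n) (Fin n) ℂ) (v : Fin n → ℂ)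
    (hv : N ^ k *ᵥ v = 0) (t : ℂ) :
    exp (t • N) *ᵥ v =
      ∑ j ∈ Finset.range k, (((j.factorial : ℂ))⁻¹ * t ^ j) • (N ^ j *ᵥ v) := by
  rw [exp_mulVec_eq]
  rw [tsum_eq_sum (s := Finset.range k)]
  · refine Finset.sum_congr rfl fun j _ => ?_
    rw [_root_.smul_pow, Matrix.smul_mulVec, smul_smul]
  · intro j hj
    rw [Finset.mem_range, not_lt] at hj
    have : N ^ j *ᵥ v = 0 := by
      have : N ^ j = N ^ (j - k) * N ^ k := by rw [← pow_add]; congr 1; omega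
      rw [this, ← Matrix.mulVec_mulVec, hv, Matrix.mulVec_zero]
    rw [_root_.smul_pow, Matrix.smul_mulVec, this, smul_zero, smul_zero]

lemma exp_smul_one {n : ℕ} (c : ℂ) :
    exp (c • (1 : Matrix (Fin n) (Fin n) ℂ)) = Complex.exp c • 1 := by
  letI : SeminormedRing (Matrix (Fin n) (Fin n) ℂ) := Matrix.linftyOpSemiNormedRing
  letI : NormedRing (Matrix (Fin n) (Fin n) ℂ) := Matrix.linftyOpNormedRing
  letI : NormedAlgebra ℂ (Matrix (Fin n) (Fin n) ℂ) := Matrix.linftyOpNormedAlgebra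
  have := (algebraMap_exp_comm (𝔸 := Matrix (Fin n) (Fin n) ℂ) c).symm
  rw [Algebra.algebraMap_eq_smul_one, Algebra.algebraMap_eq_smul_one] at this
  rw [Complex.exp_eq_exp_ℂ]; exact this

lemma key_expansion {n : ℕ} (A : Matrix (Fin n) (Fin n) ℂ) (μ : ℂ) {k : ℕ} (v : Fin n → ℂ)
    (hv : (A - μ • 1) ^ k *ᵥ v = 0) (t : ℂ) :
    exp (t • A) *ᵥ v = ∑ j ∈ Finset.range k,
      (Complex.exp (t * μ) * (((j.factorial : ℂ))⁻¹ * t ^ j)) • ((A - μ • 1) ^ j *ᵥ v) := by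
  have hsplit : t • A = (t * μ) • (1 : Matrix (Fin n) (Fin n) ℂ) + t • (A - μ • 1) := by
    rw [smul_sub, smul_smul]
    abel
  have hcomm : Commute ((t * μ) • (1 : Matrix (Fin n) (Fin n) ℂ)) (t • (A - μ • 1)) :=
    ((Commute.one_left _).smul_left _).smul_right _
  rw [hsplit, Matrix.exp_add_of_commute _ _ hcomm, exp_smul_one, smul_mul_assoc, one_mul,
    Matrix.smul_mulVec, exp_smul_mulVec_of_nilp _ _ hv, Finset.smul_sum]
  refine Finset.sum_congr rfl fun j _ => ?_
  rw [smul_smul]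

end Stmt11Aux
open NormedSpace Filter Matrix Polynomial

namespace Stmt11Aux2

lemma tendsto_coef (μ : ℂ) (hμ : μ.re < 0) (j : ℕ) :
    Tendsto (fun t : ℝ => Complex.exp ((t : ℂ) * μ) * (((j.factorial : ℂ))⁻¹ * (t : ℂ) ^ j))
      atTop (nhds 0) := by
  rw [tendsto_zero_iff_norm_tendsto_zero]
  have hnorm : ∀ t : ℝ, ‖Complex.exp ((t : ℂ) * μ) * (((j.factorial : ℂ))⁻¹ * (t : ℂ) ^ j)‖
      = Real.exp (t * μ.re) * (((j.factorial : ℝ))⁻¹ * |t| ^ j) := by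
    intro t
    simp [Complex.norm_exp, abs_pow]
  simp only [hnorm]
  have hb : 0 < -μ.re := by linarith
  have h1 := ((Real.tendsto_pow_mul_exp_neg_atTop_nhds_zero j).comp
    (tendsto_id.const_mul_atTop hb)).const_mul ((((j.factorial : ℝ))⁻¹ * ((-μ.re) ^ j)⁻¹))
  rw [mul_zero] at h1
  refine h1.congr' ?_
  filter_upwards [eventually_ge_atTop (0:ℝ)] with t ht
  have hbne : (-μ.re) ^ j ≠ 0 := pow_ne_zero _ (ne_of_gt hb)
  rw [abs_of_nonneg ht]
  simp only [Function.comp, id_eq]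
  rw [mul_pow]
  have : Real.exp (-(-μ.re * t)) = Real.exp (t * μ.re) := by ring_nf
  rw [this]
  field_simp

end Stmt11Aux2

namespace Test
open Stmt11Aux2

lemma hurwitz_tendsto {n : ℕ} (A : Matrix (Fin n) (Fin n) ℂ)
    (hA : ∀ μ : ℂ, A.charpoly.IsRoot μ → μ.re < 0) (v : Fin n → ℂ) :
    Tendsto (fun t : ℝ => exp ((t : ℂ) • A) *ᵥ v) atTop (nhds 0) := by
  let S : Submodule ℂ (Fin n → ℂ) :=
    { carrier := {w | Tendsto (fun t : ℝ => exp ((t : ℂ) • A) *ᵥ w) atTop (nhds 0)}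
      add_mem' := fun {a b} ha hb => by
        have h2 := ha.add hb
        rw [add_zero] at h2
        exact h2.congr fun t => (Matrix.mulVec_add _ _ _).symm
      zero_mem' := by
        have : Tendsto (fun _ : ℝ => (0 : Fin n → ℂ)) atTop (nhds 0) := tendsto_const_nhds
        exact this.congr fun t => (Matrix.mulVec_zero _).symm
      smul_mem' := fun c w hw => by
        have h2 := hw.const_smul c
        rw [smul_zero] at h2
        exact h2.congr fun t => (Matrix.mulVec_smul _ _ _).symm }
  suffices hv : v ∈ S from hv
  set L : Module.End ℂ (Fin n → ℂ) := Matrix.toLinAlgEquiv' A with hL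
  have htop := Module.End.iSup_maxGenEigenspace_eq_top L
  have hle : ⨆ μ, L.maxGenEigenspace μ ≤ S := by
    refine iSup_le fun μ w hw => ?_
    rcases eq_or_ne w 0 with rfl | hw0
    · exact S.zero_mem
    obtain ⟨k, hk⟩ := (Module.End.mem_maxGenEigenspace L μ w).mp hw
    have hroot : μ.re < 0 := by
      apply hA
      have hmem : w ∈ L.genEigenspace μ (k : ℕ∞) :=
        Module.End.mem_genEigenspace_nat.mpr (LinearMap.mem_ker.mpr hk)
      have hgen : L.HasGenEigenvalue μ k := by
        rw [Module.End.HasGenEigenvalue, Module.End.HasUnifEigenvalue]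
        exact Submodule.ne_bot_iff _ |>.mpr ⟨w, hmem, hw0⟩
      have hev : L.HasEigenvalue μ := Module.End.hasEigenvalue_of_hasGenEigenvalue hgen
      have hmin : (minpoly ℂ L).IsRoot μ := (Module.End.hasEigenvalue_iff_isRoot).mp hev
      rw [hL, minpoly.algEquiv_eq] at hmin
      exact hmin.dvd (A.minpoly_dvd_charpoly)
    have hmat : (A - μ • 1) ^ k *ᵥ w = 0 := by
      have h3 : Matrix.toLinAlgEquiv' ((A - μ • 1 : Matrix (Fin n) (Fin n) ℂ) ^ k) w = 0 := by
        rw [map_pow, map_sub, _root_.map_smul, _root_.map_one]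
        exact hk
      rwa [Matrix.toLinAlgEquiv'_apply] at h3
    have hexp : ∀ t : ℝ, exp ((t : ℂ) • A) *ᵥ w = ∑ j ∈ Finset.range k,
        (Complex.exp ((t : ℂ) * μ) * (((j.factorial : ℂ))⁻¹ * (t : ℂ) ^ j)) •
          ((A - μ • 1) ^ j *ᵥ w) :=
      fun t => Stmt11Aux.key_expansion A μ w hmat (t : ℂ)
    have hsum : Tendsto (fun t : ℝ => ∑ j ∈ Finset.range k,
        (Complex.exp ((t : ℂ) * μ) * (((j.factorial : ℂ))⁻¹ * (t : ℂ) ^ j)) •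
          ((A - μ • 1) ^ j *ᵥ w)) atTop (nhds 0) := by
      have h4 := tendsto_finset_sum (Finset.range k)
        (fun j _ => (tendsto_coef μ hroot j).smul_const ((A - μ • 1) ^ j *ᵥ w))
      simpa using h4
    exact hsum.congr fun t => (hexp t).symm
  exact hle (htop ▸ Submodule.mem_top)

end Test

namespace Test2
open Test

lemma real_tendsto {n : ℕ} (J : Matrix (Fin n) (Fin n) ℝ)
    (hA : ∀ μ : ℂ, (J.map Complex.ofReal).charpoly.IsRoot μ → μ.re < 0) (w : Fin n → ℝ) :
    Tendsto (fun t : ℝ => exp (t • J) *ᵥ w) atTop (nhds 0) := by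
  letI : SeminormedRing (Matrix (Fin n) (Fin n) ℝ) := Matrix.linftyOpSemiNormedRing
  letI : NormedRing (Matrix (Fin n) (Fin n) ℝ) := Matrix.linftyOpNormedRing
  letI : NormedAlgebra ℝ (Matrix (Fin n) (Fin n) ℝ) := Matrix.linftyOpNormedAlgebra
  letI : SeminormedRing (Matrix (Fin n) (Fin n) ℂ) := Matrix.linftyOpSemiNormedRing
  letI : NormedRing (Matrix (Fin n) (Fin n) ℂ) := Matrix.linftyOpNormedRing
  letI : NormedAlgebra ℝ (Matrix (Fin n) (Fin n) ℂ) := Matrix.linftyOpNormedAlgebra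
  set Ac : Matrix (Fin n) (Fin n) ℂ := J.map Complex.ofReal with hAc
  have hmap : ∀ t : ℝ, (exp (t • J)).map Complex.ofReal = exp ((t : ℂ) • Ac) := by
    intro t
    have h1 : (Complex.ofRealHom.mapMatrix :
        Matrix (Fin n) (Fin n) ℝ →+* Matrix (Fin n) (Fin n) ℂ) (exp (t • J))
        = exp ((Complex.ofRealHom.mapMatrix :
            Matrix (Fin n) (Fin n) ℝ →+* Matrix (Fin n) (Fin n) ℂ) (t • J)) :=
      by letI : NormedAlgebra ℚ (Matrix (Fin n) (Fin n) ℝ) := Matrix.linftyOpNormedAlgebra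
         exact map_exp _ (Continuous.matrix_map continuous_id Complex.continuous_ofReal) _
    have h2 : (Complex.ofRealHom.mapMatrix :
        Matrix (Fin n) (Fin n) ℝ →+* Matrix (Fin n) (Fin n) ℂ) (t • J) = (t : ℂ) • Ac := by
      ext i j
      simp only [RingHom.mapMatrix_apply, Matrix.map_apply, Matrix.smul_apply, smul_eq_mul, hAc,
        Complex.ofRealHom_eq_coe, Complex.ofReal_mul]
    have h3 : (exp : Matrix (Fin n) (Fin n) ℂ → Matrix (Fin n) (Fin n) ℂ) = exp :=
      rfl
    calc (exp (t • J)).map Complex.ofReal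
        = exp ((t : ℂ) • Ac) := by rw [← h2]; exact h1
      _ = exp ((t : ℂ) • Ac) := by rw [h3]
  have hc := hurwitz_tendsto Ac hA (fun j => (w j : ℂ))
  rw [tendsto_pi_nhds] at hc ⊢
  intro i
  have hci : Tendsto (fun t : ℝ => (exp ((t : ℂ) • Ac) *ᵥ fun j => (w j : ℂ)) i)
      atTop (nhds 0) := by
    have := hc i
    simpa using this
  have hre := (Complex.continuous_re.tendsto 0).comp hci
  simp only [Complex.zero_re, Function.comp_def] at hre
  refine hre.congr fun t => ?_
  have hcast : ((exp (t • J) *ᵥ w) i : ℂ) = (exp ((t : ℂ) • Ac) *ᵥ fun j => (w j : ℂ)) i := by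
    rw [← hmap t]
    simp only [Matrix.mulVec, dotProduct, Matrix.map_apply]
    push_cast
    rfl
  rw [← hcast, Complex.ofReal_re]

end Test2

/-- Koopman expansion of the flow: if `h` is a `C¹` diffeomorphism of the basin `B` onto a
neighborhood `V` of `0` linearizing the flow (`h(φ(t,x)) = e^{Jt}h(x)`, `h(x*) = 0`,
`Dh(x*) = I`) with `J` Hurwitz, then `φ(t,x) − x* − e^{Jt}h(x) = o(‖e^{Jt}h(x)‖)` as
`t → ∞`, for every `x ∈ B`. -/
theorem stmt_11 {n : ℕ} (B : Set (Fin n → ℝ)) (hBopen : IsOpen B)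
    (xs : Fin n → ℝ) (hxs : xs ∈ B)
    (f : (Fin n → ℝ) → (Fin n → ℝ))
    (φ : ℝ → (Fin n → ℝ) → (Fin n → ℝ))
    (hφ0 : ∀ x ∈ B, φ 0 x = x)
    (hφB : ∀ t : ℝ, 0 ≤ t → ∀ x ∈ B, φ t x ∈ B)
    (hφ' : ∀ x ∈ B, ∀ t : ℝ, 0 ≤ t → HasDerivAt (fun τ => φ τ x) (f (φ t x)) t)
    (J : Matrix (Fin n) (Fin n) ℝ)
    (hHurwitz : ∀ μ : ℂ, (Matrix.charpoly (J.map Complex.ofReal)).IsRoot μ → μ.re < 0)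
    (V : Set (Fin n → ℝ)) (hVopen : IsOpen V) (hV0 : (0 : Fin n → ℝ) ∈ V)
    (h : (Fin n → ℝ) → (Fin n → ℝ)) (g : (Fin n → ℝ) → (Fin n → ℝ))
    (hhC1 : ContDiffOn ℝ 1 h B) (hgC1 : ContDiffOn ℝ 1 g V)
    (himage : h '' B = V)
    (hinv : ∀ x ∈ B, g (h x) = x) (hinv' : ∀ y ∈ V, h (g y) = y)
    (hhxs : h xs = 0)
    (hDh : fderiv ℝ h xs = ContinuousLinearMap.id ℝ (Fin n → ℝ))
    (hconj : ∀ t : ℝ, 0 ≤ t → ∀ x ∈ B,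
      h (φ t x) = (NormedSpace.exp (t • J)).mulVec (h x)) :
    ∀ x ∈ B, ∀ ε : ℝ, 0 < ε → ∃ T : ℝ, ∀ t : ℝ, T ≤ t →
      ‖φ t x - xs - (NormedSpace.exp (t • J)).mulVec (h x)‖ ≤
        ε * ‖(NormedSpace.exp (t • J)).mulVec (h x)‖ := by
  intro x hx ε hε
  have hgx : g 0 = xs := by rw [← hhxs]; exact hinv xs hxs
  have hgdiffAt : DifferentiableAt ℝ g 0 :=
    (hgC1.differentiableOn one_ne_zero).differentiableAt (hVopen.mem_nhds hV0)
  have hhdiffAt : DifferentiableAt ℝ h xs :=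
    (hhC1.differentiableOn one_ne_zero).differentiableAt (hBopen.mem_nhds hxs)
  have h2 : HasFDerivAt g (fderiv ℝ g 0) (h xs) := by
    rw [hhxs]; exact hgdiffAt.hasFDerivAt
  have h1 : HasFDerivAt h (ContinuousLinearMap.id ℝ (Fin n → ℝ)) xs := by
    have := hhdiffAt.hasFDerivAt; rwa [hDh] at this
  have hcomp : HasFDerivAt (g ∘ h)
      ((fderiv ℝ g 0).comp (ContinuousLinearMap.id ℝ (Fin n → ℝ))) xs :=
    h2.comp xs h1
  have hid : HasFDerivAt (g ∘ h) (ContinuousLinearMap.id ℝ (Fin n → ℝ)) xs := by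
    refine (hasFDerivAt_id xs).congr_of_eventuallyEq ?_
    filter_upwards [hBopen.mem_nhds hxs] with y hy
    exact hinv y hy
  have hDg : fderiv ℝ g 0 = ContinuousLinearMap.id ℝ (Fin n → ℝ) := by
    have huniq := hcomp.unique hid
    rwa [ContinuousLinearMap.comp_id] at huniq
  have hg' : HasFDerivAt g (ContinuousLinearMap.id ℝ (Fin n → ℝ)) 0 := by
    have := hgdiffAt.hasFDerivAt; rwa [hDg] at this
  have hlo := hg'.isLittleO.def hε
  have hy := Test2.real_tendsto J hHurwitz (h x)
  have hev := hy.eventually hlo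
  obtain ⟨T, hT⟩ := Filter.eventually_atTop.1 (hev.and (Filter.eventually_ge_atTop 0))
  refine ⟨T, fun t ht => ?_⟩
  obtain ⟨hb1, hb2⟩ := hT t ht
  have hφt : φ t x = g ((NormedSpace.exp (t • J)).mulVec (h x)) := by
    rw [← hconj t hb2 x hx]
    exact (hinv _ (hφB t hb2 x hx)).symm
  rw [hφt]
  simpa [hgx, sub_zero] using hb1
end

section
/- Let K be a positive cone, let C ⊆ D, and suppose the system ẋ = f(x) is eventually monotone on C with respect to K. Let λ₁ < 0 be a real number and let g : ℝⁿ → ℝ be continuous and monotone with respect to K (g(a) ≥ g(b) whenever a ⪰_K b). Let x, y ∈ C with x ⪰_K y, and suppose the Laplace averages s(x) = lim_{t→∞} (1/t) ∫₀ᵗ g(φ(σ,x)) e^{−λ₁ σ} dσ and s(y) = lim_{t→∞} (1/t) ∫₀ᵗ g(φ(σ,y)) e^{−λ₁ σ} dσ both exist in ℝ. Then s(x) ≥ s(y). -/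
/-- Monotonicity of Laplace averages: if the system is eventually monotone on `C` with
respect to a positive cone `K`, `g` is continuous and monotone with respect to `K`,
`λ₁ < 0`, and the Laplace averages of `g` along the trajectories from `x ⪰_K y` exist,
then they are ordered accordingly. -/
theorem stmt_12 {n : ℕ} (D : Set (Fin n → ℝ)) (hD : IsOpen D)
    (f : (Fin n → ℝ) → (Fin n → ℝ)) (hf : ContDiffOn ℝ 1 f D)
    (φ : ℝ → (Fin n → ℝ) → (Fin n → ℝ))
    (hφ0 : ∀ x ∈ D, φ 0 x = x)
    (hφ' : ∀ x ∈ D, ∀ t : ℝ, 0 ≤ t → HasDerivAt (fun τ => φ τ x) (f (φ t x)) t)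
    (K : Set (Fin n → ℝ))
    (hKscale : ∀ c : ℝ, 0 ≤ c → ∀ x ∈ K, c • x ∈ K)
    (hKadd : ∀ x ∈ K, ∀ y ∈ K, x + y ∈ K)
    (hKpointed : ∀ x ∈ K, -x ∈ K → x = 0)
    (C : Set (Fin n → ℝ)) (hCD : C ⊆ D)
    (hmon : ∀ x ∈ C, ∀ y ∈ C, x - y ∈ K → ∃ τ₀ : ℝ, 0 ≤ τ₀ ∧ ∀ t : ℝ, τ₀ ≤ t →
      φ t x - φ t y ∈ K)
    (l₁ : ℝ) (hl₁ : l₁ < 0)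
    (g : (Fin n → ℝ) → ℝ) (hgcont : Continuous g)
    (hgmon : ∀ a b : Fin n → ℝ, a - b ∈ K → g b ≤ g a)
    (x y : Fin n → ℝ) (hx : x ∈ C) (hy : y ∈ C) (hxy : x - y ∈ K)
    (sx sy : ℝ)
    (hsx : Filter.Tendsto
      (fun t : ℝ => (1 / t) * ∫ σ in (0:ℝ)..t, g (φ σ x) * Real.exp (-l₁ * σ))
      Filter.atTop (nhds sx))
    (hsy : Filter.Tendsto
      (fun t : ℝ => (1 / t) * ∫ σ in (0:ℝ)..t, g (φ σ y) * Real.exp (-l₁ * σ))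
      Filter.atTop (nhds sy)) :
    sy ≤ sx := by
  obtain ⟨τ₀, hτ₀, hmono⟩ := hmon x hx y hy hxy
  have hxD := hCD hx
  have hyD := hCD hy
  have hcont : ∀ z ∈ D, ContinuousOn (fun σ => g (φ σ z) * Real.exp (-l₁ * σ)) (Set.Ici 0) := by
    intro z hz t ht
    have h1 : ContinuousAt (fun τ => φ τ z) t := (hφ' z hz t ht).continuousAt
    exact ((hgcont.continuousAt.comp h1).mul
      ((Real.continuous_exp.comp (continuous_const.mul continuous_id)).continuousAt)).continuousWithinAt
  have hsub : ∀ a b : ℝ, 0 ≤ a → 0 ≤ b → Set.uIcc a b ⊆ Set.Ici 0 := by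
    intro a b ha hb σ hσ
    exact le_trans (le_min ha hb) hσ.1
  have hintx : ∀ a b : ℝ, 0 ≤ a → 0 ≤ b →
      IntervalIntegrable (fun σ => g (φ σ x) * Real.exp (-l₁ * σ)) MeasureTheory.volume a b :=
    fun a b ha hb => ((hcont x hxD).mono (hsub a b ha hb)).intervalIntegrable
  have hinty : ∀ a b : ℝ, 0 ≤ a → 0 ≤ b →
      IntervalIntegrable (fun σ => g (φ σ y) * Real.exp (-l₁ * σ)) MeasureTheory.volume a b :=
    fun a b ha hb => ((hcont y hyD).mono (hsub a b ha hb)).intervalIntegrable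
  set c : ℝ := ∫ σ in (0:ℝ)..τ₀,
    (g (φ σ x) * Real.exp (-l₁ * σ) - g (φ σ y) * Real.exp (-l₁ * σ)) with hc
  have hkey : ∀ t : ℝ, max τ₀ 1 ≤ t →
      (1 / t) * (∫ σ in (0:ℝ)..t, g (φ σ y) * Real.exp (-l₁ * σ)) + c * (1 / t) ≤
      (1 / t) * (∫ σ in (0:ℝ)..t, g (φ σ x) * Real.exp (-l₁ * σ)) := by
    intro t ht
    have hτt : τ₀ ≤ t := le_trans (le_max_left _ _) ht
    have ht1 : (1:ℝ) ≤ t := le_trans (le_max_right _ _) ht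
    have ht0 : (0:ℝ) < t := lt_of_lt_of_le one_pos ht1
    have hdiff : (∫ σ in (0:ℝ)..t, g (φ σ x) * Real.exp (-l₁ * σ)) -
        (∫ σ in (0:ℝ)..t, g (φ σ y) * Real.exp (-l₁ * σ)) =
        ∫ σ in (0:ℝ)..t,
          (g (φ σ x) * Real.exp (-l₁ * σ) - g (φ σ y) * Real.exp (-l₁ * σ)) :=
      (intervalIntegral.integral_sub (hintx 0 t le_rfl ht0.le) (hinty 0 t le_rfl ht0.le)).symm
    have hsplit : (∫ σ in (0:ℝ)..t,
          (g (φ σ x) * Real.exp (-l₁ * σ) - g (φ σ y) * Real.exp (-l₁ * σ))) =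
        c + ∫ σ in τ₀..t,
          (g (φ σ x) * Real.exp (-l₁ * σ) - g (φ σ y) * Real.exp (-l₁ * σ)) := by
      rw [hc]
      exact (intervalIntegral.integral_add_adjacent_intervals
        ((hintx 0 τ₀ le_rfl hτ₀).sub (hinty 0 τ₀ le_rfl hτ₀))
        ((hintx τ₀ t hτ₀ ht0.le).sub (hinty τ₀ t hτ₀ ht0.le))).symm
    have hnn : 0 ≤ ∫ σ in τ₀..t,
        (g (φ σ x) * Real.exp (-l₁ * σ) - g (φ σ y) * Real.exp (-l₁ * σ)) := by
      apply intervalIntegral.integral_nonneg hτt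
      intro σ hσ
      have hK := hmono σ hσ.1
      have hg : g (φ σ y) ≤ g (φ σ x) := hgmon _ _ hK
      have he : (0:ℝ) < Real.exp (-l₁ * σ) := Real.exp_pos _
      nlinarith
    have hle : c ≤ (∫ σ in (0:ℝ)..t, g (φ σ x) * Real.exp (-l₁ * σ)) -
        (∫ σ in (0:ℝ)..t, g (φ σ y) * Real.exp (-l₁ * σ)) := by
      rw [hdiff, hsplit]; linarith
    have h1t : (0:ℝ) < 1 / t := by positivity
    nlinarith [mul_le_mul_of_nonneg_left hle h1t.le]
  have htend : Filter.Tendsto (fun t : ℝ =>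
      (1 / t) * (∫ σ in (0:ℝ)..t, g (φ σ y) * Real.exp (-l₁ * σ)) + c * (1 / t))
      Filter.atTop (nhds (sy + c * 0)) := by
    exact hsy.add (Filter.Tendsto.const_mul c (by simpa [one_div] using (tendsto_inv_atTop_zero : Filter.Tendsto (fun r : ℝ => r⁻¹) Filter.atTop (nhds 0)) : Filter.Tendsto (fun t : ℝ => 1 / t) Filter.atTop (nhds 0)))
  have := le_of_tendsto_of_tendsto htend hsx
    (Filter.eventually_atTop.mpr ⟨max τ₀ 1, hkey⟩)
  linarith
end

section
/- Let K be a positive cone with nonempty interior, let C ⊆ D be forward-invariant, and suppose the system ẋ = f(x) is strongly eventually monotone on C with respect to K. Let λ₁ ∈ ℝ and let s₁ : C → ℝ satisfy the Koopman eigenfunction relation s₁(φ(t,x)) = e^{λ₁ t} s₁(x) for all t ≥ 0 and x ∈ C, and suppose s₁(z) > s₁(w) for all z, w ∈ C with z ≫_K w, and s₁(z) ≥ s₁(w) for all z, w ∈ C with z ⪰_K w. Then s₁(x) > s₁(y) for all x, y ∈ C with x ≻_K y. -/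
/-- For a strongly eventually monotone system on a forward-invariant set `C` with respect to
a positive cone `K` with nonempty interior, a Koopman eigenfunction `s₁` that is monotone
(`z ⪰_K w → s₁(z) ≥ s₁(w)`) and strictly monotone on the strong order
(`z ≫_K w → s₁(z) > s₁(w)`) is strictly monotone on the strict order:
`x ≻_K y → s₁(x) > s₁(y)`. -/
theorem stmt_13 {n : ℕ} (D : Set (Fin n → ℝ)) (hD : IsOpen D)
    (f : (Fin n → ℝ) → (Fin n → ℝ)) (hf : ContDiffOn ℝ 1 f D)
    (φ : ℝ → (Fin n → ℝ) → (Fin n → ℝ))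
    (hφ0 : ∀ x ∈ D, φ 0 x = x)
    (hφ' : ∀ x ∈ D, ∀ t : ℝ, 0 ≤ t → HasDerivAt (fun τ => φ τ x) (f (φ t x)) t)
    (K : Set (Fin n → ℝ))
    (hKscale : ∀ c : ℝ, 0 ≤ c → ∀ x ∈ K, c • x ∈ K)
    (hKadd : ∀ x ∈ K, ∀ y ∈ K, x + y ∈ K)
    (hKpointed : ∀ x ∈ K, -x ∈ K → x = 0)
    (hKint : (interior K).Nonempty)
    (C : Set (Fin n → ℝ)) (hCD : C ⊆ D)
    (hCinv : ∀ t : ℝ, 0 ≤ t → ∀ x ∈ C, φ t x ∈ C)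
    (hmon : ∀ x ∈ C, ∀ y ∈ C, x - y ∈ K → ∃ τ₀ : ℝ, 0 ≤ τ₀ ∧ ∀ t : ℝ, τ₀ ≤ t →
      φ t x - φ t y ∈ K)
    (hsmon : ∀ x ∈ C, ∀ y ∈ C, x - y ∈ K → x ≠ y → ∃ τ₀ : ℝ, 0 ≤ τ₀ ∧ ∀ t : ℝ, τ₀ ≤ t →
      φ t x - φ t y ∈ interior K)
    (l₁ : ℝ) (s₁ : (Fin n → ℝ) → ℝ)
    (heig : ∀ t : ℝ, 0 ≤ t → ∀ x ∈ C, s₁ (φ t x) = Real.exp (l₁ * t) * s₁ x)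
    (hstrict : ∀ z ∈ C, ∀ w ∈ C, z - w ∈ interior K → s₁ w < s₁ z)
    (hge : ∀ z ∈ C, ∀ w ∈ C, z - w ∈ K → s₁ w ≤ s₁ z) :
    ∀ x ∈ C, ∀ y ∈ C, x - y ∈ K → x ≠ y → s₁ y < s₁ x := by
  intro x hx y hy hxy hne
  obtain ⟨τ₀, hτ₀, hτ⟩ := hsmon x hx y hy hxy hne
  have hlt := hstrict _ (hCinv τ₀ hτ₀ x hx) _ (hCinv τ₀ hτ₀ y hy) (hτ τ₀ le_rfl)
  rw [heig τ₀ hτ₀ x hx, heig τ₀ hτ₀ y hy] at hlt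
  exact lt_of_mul_lt_mul_left hlt (Real.exp_pos _).le
end

section
/- Let K be a closed positive cone with nonempty interior, let v₁ ∈ int(K), let λ₁ ∈ ℝ, and let s₁ : C → ℝ satisfy s₁(x) > s₁(y) for all x, y ∈ C with x ≻_K y. Suppose that for all x, y ∈ C and t ≥ 0 the flow satisfies φ(t,x) − φ(t,y) = e^{λ₁ t} ( v₁ (s₁(x) − s₁(y)) + R̄(t,x,y) ), where for each fixed x, y ∈ C, R̄(t,x,y) → 0 as t → ∞. Then the system is strongly eventually monotone on C with respect to K: for all x, y ∈ C with x ⪰_K y there exists τ₀ ≥ 0 with φ(t,x) ⪰_K φ(t,y) for all t ≥ τ₀, and for all x, y ∈ C with x ≻_K y there exists τ₀ ≥ 0 with φ(t,x) − φ(t,y) ∈ int(K) for all t ≥ τ₀. -/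
open Pointwise


/-- Sufficiency part of the spectral characterization of strong eventual monotonicity: if
the flow admits the dominant Koopman expansion
`φ(t,x) − φ(t,y) = e^{λ₁ t}(v₁(s₁(x) − s₁(y)) + R̄(t,x,y))` with `v₁ ∈ int(K)`,
`s₁` strictly increasing on `≻_K`, and `R̄(t,x,y) → 0` as `t → ∞`, then the system is
strongly eventually monotone on `C` with respect to the closed positive cone `K`. -/
theorem stmt_14 {n : ℕ} (C : Set (Fin n → ℝ))
    (φ : ℝ → (Fin n → ℝ) → (Fin n → ℝ))
    (K : Set (Fin n → ℝ)) (hKclosed : IsClosed K)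
    (hKscale : ∀ c : ℝ, 0 ≤ c → ∀ x ∈ K, c • x ∈ K)
    (hKadd : ∀ x ∈ K, ∀ y ∈ K, x + y ∈ K)
    (hKpointed : ∀ x ∈ K, -x ∈ K → x = 0)
    (hKint : (interior K).Nonempty)
    (v₁ : Fin n → ℝ) (hv₁ : v₁ ∈ interior K)
    (l₁ : ℝ) (s₁ : (Fin n → ℝ) → ℝ)
    (hs₁ : ∀ x ∈ C, ∀ y ∈ C, x - y ∈ K → x ≠ y → s₁ y < s₁ x)
    (R : ℝ → (Fin n → ℝ) → (Fin n → ℝ) → (Fin n → ℝ))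
    (hR : ∀ x ∈ C, ∀ y ∈ C,
      Filter.Tendsto (fun t : ℝ => R t x y) Filter.atTop (nhds 0))
    (hexp : ∀ x ∈ C, ∀ y ∈ C, ∀ t : ℝ, 0 ≤ t →
      φ t x - φ t y = Real.exp (l₁ * t) • ((s₁ x - s₁ y) • v₁ + R t x y)) :
    (∀ x ∈ C, ∀ y ∈ C, x - y ∈ K → ∃ τ₀ : ℝ, 0 ≤ τ₀ ∧ ∀ t : ℝ, τ₀ ≤ t →
      φ t x - φ t y ∈ K) ∧
    (∀ x ∈ C, ∀ y ∈ C, x - y ∈ K → x ≠ y → ∃ τ₀ : ℝ, 0 ≤ τ₀ ∧ ∀ t : ℝ, τ₀ ≤ t →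
      φ t x - φ t y ∈ interior K) := by
  have h0K : (0 : Fin n → ℝ) ∈ K := by
    obtain ⟨w, hw⟩ := hKint
    simpa using hKscale 0 le_rfl w (interior_subset hw)
  have hsm : ∀ c : ℝ, 0 < c → ∀ x ∈ interior K, c • x ∈ interior K := by
    intro c hc x hx
    have hopen : IsOpen (c • interior K) := isOpen_interior.smul₀ (ne_of_gt hc)
    have hsub : c • interior K ⊆ K := by
      rintro _ ⟨y, hy, rfl⟩
      exact hKscale c hc.le y (interior_subset hy)
    exact interior_maximal hsub hopen ⟨x, hx, rfl⟩
  have strong : ∀ x ∈ C, ∀ y ∈ C, x - y ∈ K → x ≠ y → ∃ τ₀ : ℝ, 0 ≤ τ₀ ∧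
      ∀ t : ℝ, τ₀ ≤ t → φ t x - φ t y ∈ interior K := by
    intro x hx y hy hxyK hne
    have hs : 0 < s₁ x - s₁ y := sub_pos.mpr (hs₁ x hx y hy hxyK hne)
    have hv : (s₁ x - s₁ y) • v₁ ∈ interior K := hsm _ hs v₁ hv₁
    have hU : ∀ᶠ t in Filter.atTop, (s₁ x - s₁ y) • v₁ + R t x y ∈ interior K := by
      have h1 : Filter.Tendsto (fun t : ℝ => (s₁ x - s₁ y) • v₁ + R t x y)
          Filter.atTop (nhds ((s₁ x - s₁ y) • v₁ + 0)) :=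
        Filter.Tendsto.const_add _ (hR x hx y hy)
      rw [add_zero] at h1
      exact h1 (isOpen_interior.mem_nhds hv)
    obtain ⟨a, ha⟩ := Filter.eventually_atTop.mp hU
    refine ⟨max a 0, le_max_right _ _, fun t ht => ?_⟩
    have ht0 : 0 ≤ t := le_trans (le_max_right a 0) ht
    rw [hexp x hx y hy t ht0]
    exact hsm _ (Real.exp_pos _) _ (ha t (le_trans (le_max_left a 0) ht))
  constructor
  · intro x hx y hy hxyK
    by_cases hne : x = y
    · subst hne; exact ⟨0, le_rfl, fun t _ => by simpa using h0K⟩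
    · obtain ⟨τ₀, h0, h⟩ := strong x hx y hy hxyK hne
      exact ⟨τ₀, h0, fun t ht => interior_subset (h t ht)⟩
  · exact strong
end

section
/- Let K ⊆ ℝⁿ be a closed positive cone with dual cone K* = { u ∈ ℝⁿ : uᵀz ≥ 0 for all z ∈ K }, let C ⊆ ℝⁿ be open and p-convex with respect to K (for all x, y ∈ C with x ⪰_K y and all μ ∈ (0,1), μx + (1−μ)y ∈ C), and let s₁ : C → ℝ be continuously differentiable. Then s₁ is monotone with respect to K on C (s₁(x) ≥ s₁(y) whenever x, y ∈ C and x ⪰_K y) if and only if ∇s₁(x) ∈ K* for all x ∈ C. -/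
open Matrix

lemma grad_dot_aux {n : ℕ} (f : (Fin n → ℝ) →L[ℝ] ℝ) (z : Fin n → ℝ) :
    (fun i => f (Pi.single i 1)) ⬝ᵥ z = f z := by
  have hz : z = ∑ i, z i • (Pi.single i 1 : Fin n → ℝ) := by
    funext j
    simp [Finset.sum_apply, Pi.single_apply]
  conv_rhs => rw [hz]
  rw [map_sum]
  simp [dotProduct, mul_comm]

/-- A continuously differentiable function `s₁` on an open p-convex set `C` is monotone with
respect to a closed positive cone `K` if and only if its gradient lies in the dual cone `K*`
everywhere on `C`. -/
theorem stmt_18 {n : ℕ} (K : Set (Fin n → ℝ)) (hKclosed : IsClosed K)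
    (hKscale : ∀ c : ℝ, 0 ≤ c → ∀ x ∈ K, c • x ∈ K)
    (hKadd : ∀ x ∈ K, ∀ y ∈ K, x + y ∈ K)
    (hKpointed : ∀ x ∈ K, -x ∈ K → x = 0)
    (Kstar : Set (Fin n → ℝ))
    (hKstar : Kstar = {u : Fin n → ℝ | ∀ z ∈ K, 0 ≤ u ⬝ᵥ z})
    (C : Set (Fin n → ℝ)) (hCopen : IsOpen C)
    (hpconv : ∀ x ∈ C, ∀ y ∈ C, x - y ∈ K → ∀ μ : ℝ, μ ∈ Set.Ioo (0 : ℝ) 1 →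
      μ • x + (1 - μ) • y ∈ C)
    (s₁ : (Fin n → ℝ) → ℝ) (hs₁ : ContDiffOn ℝ 1 s₁ C) :
    (∀ x ∈ C, ∀ y ∈ C, x - y ∈ K → s₁ y ≤ s₁ x) ↔
      (∀ x ∈ C, (fun i => fderiv ℝ s₁ x (Pi.single i 1)) ∈ Kstar) := by
  have hdiff : ∀ x ∈ C, DifferentiableAt ℝ s₁ x := fun x hx =>
    (hs₁.differentiableOn one_ne_zero).differentiableAt (hCopen.mem_nhds hx)
  subst hKstar
  constructor
  · intro hmono x hx z hz
    rw [grad_dot_aux]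
    have hdf : HasFDerivAt s₁ (fderiv ℝ s₁ x) x := (hdiff x hx).hasFDerivAt
    -- g t = s₁ (x + t • z)
    set g : ℝ → ℝ := fun t => s₁ (x + t • z) with hg
    have hφ : ∀ t : ℝ, HasDerivAt (fun t : ℝ => x + t • z) z t := by
      intro t
      simpa using (hasDerivAt_id t).smul_const z |>.const_add x
    have hgd : HasDerivAt g (fderiv ℝ s₁ x z) 0 := by
      have hdf0 : HasFDerivAt s₁ (fderiv ℝ s₁ x) (x + (0:ℝ) • z) := by simpa using hdf
      have := hdf0.comp_hasDerivAt 0 (hφ 0)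
      exact this
    -- x + t • z ∈ C for small t
    have hcont : Continuous (fun t : ℝ => x + t • z) := by continuity
    have hmem : ∀ᶠ t in nhds (0 : ℝ), x + t • z ∈ C := by
      have : (fun t : ℝ => x + t • z) ⁻¹' C ∈ nhds (0 : ℝ) := by
        apply hcont.continuousAt.preimage_mem_nhds
        simpa using hCopen.mem_nhds hx
      exact this
    -- slope nonneg on right
    have hslope : ∀ᶠ t in nhdsWithin (0:ℝ) (Set.Ioi 0), 0 ≤ slope g 0 t := by
      filter_upwards [nhdsWithin_le_nhds hmem, self_mem_nhdsWithin] with t htC ht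
      have ht : (0:ℝ) < t := ht
      have hKt : (x + t • z) - x ∈ K := by
        simpa using hKscale t ht.le z hz
      have := hmono (x + t • z) htC x hx hKt
      have hg0 : g 0 = s₁ x := by simp [hg]
      rw [slope_def_field, hg0, sub_zero]
      exact div_nonneg (sub_nonneg.mpr this) ht.le
    have htend : Filter.Tendsto (slope g 0) (nhdsWithin (0:ℝ) (Set.Ioi 0))
        (nhds (fderiv ℝ s₁ x z)) := by
      have := hasDerivAt_iff_tendsto_slope.mp hgd
      exact this.mono_left (nhdsWithin_mono _ (by intro t ht; exact ne_of_gt ht))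
    exact ge_of_tendsto htend hslope
  · intro hgrad x hx y hy hxy
    set p : ℝ → (Fin n → ℝ) := fun μ => y + μ • (x - y) with hp
    have hpC : ∀ μ ∈ Set.Icc (0:ℝ) 1, p μ ∈ C := by
      intro μ hμ
      rcases eq_or_lt_of_le hμ.1 with h0 | h0
      · simp [hp, ← h0]; exact hy
      rcases eq_or_lt_of_le hμ.2 with h1 | h1
      · simp [hp, h1]; exact hx
      have := hpconv x hx y hy hxy μ ⟨h0, h1⟩
      have heq : p μ = μ • x + (1 - μ) • y := by
        simp [hp, smul_sub, sub_smul]; module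
      rwa [heq]
    have hgd : ∀ μ ∈ Set.Icc (0:ℝ) 1,
        HasDerivAt (fun t => s₁ (p t)) (fderiv ℝ s₁ (p μ) (x - y)) μ := by
      intro μ hμ
      have hdf : HasFDerivAt s₁ (fderiv ℝ s₁ (p μ)) (p μ) :=
        (hdiff _ (hpC μ hμ)).hasFDerivAt
      have hφ : HasDerivAt p (x - y) μ := by
        simpa [hp] using ((hasDerivAt_id μ).smul_const (x - y)).const_add y
      exact hdf.comp_hasDerivAt μ hφ
    have hmono : MonotoneOn (fun t => s₁ (p t)) (Set.Icc (0:ℝ) 1) := by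
      apply monotoneOn_of_deriv_nonneg (convex_Icc 0 1)
      · exact fun μ hμ => (hgd μ hμ).continuousAt.continuousWithinAt
      · intro μ hμ
        rw [interior_Icc] at hμ
        exact (hgd μ (Set.mem_Icc_of_Ioo hμ)).differentiableAt.differentiableWithinAt
      · intro μ hμ
        rw [interior_Icc] at hμ
        rw [(hgd μ (Set.mem_Icc_of_Ioo hμ)).deriv]
        have := hgrad (p μ) (hpC μ (Set.mem_Icc_of_Ioo hμ)) (x - y) hxy
        rwa [grad_dot_aux] at this
    have := hmono (Set.left_mem_Icc.mpr zero_le_one) (Set.right_mem_Icc.mpr zero_le_one)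
      zero_le_one
    simpa [hp] using this
end
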